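/- arXiv:0907.0814 — 5 statements merged into one kernel-verified Lean document; each statement's English description precedes it below -/
import Mathlib

section
/- Let G, T, (z_t)_{t∈T}, M, Σ, λ, φ, W and f ∈ Σ with φ(f) = χ_W be as follows: (z_t)_{t∈T} are linearly independent in ℂ[G] spanning M, Σ ⊆ M is closed under multiplication, φ : M → ClassFun(G) is linear with φ(z_t) = λ(t) an irreducible character for each t, and φ is multiplicative on Σ. Assume moreover that each z_t is a 0/1-sum z_t = Σ_{σ ∈ T_t} σ over a nonempty subset T_t ⊆ G, that the supports T_t are pairwise disjoint, and write f = Σ_{s ∈ S} ω_s s with S = supp(f) and ω_s = [s]f. Then for every irreducible character χ of G, every d ≥ 1, and every choice of elements σ_t ∈ T_t, the multiplicity of χ in W^{⊗d} equals Σ_{t∈T, λ(t)=χ} Σ_{w} ω_{w_1}⋯ω_{w_d}, where the inner sum ranges over all words w = (w_1,…,w_d) ∈ S^d with w_1 w_2 ⋯ w_d = σ_t. -/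
open CategoryTheory

open Polynomial in

open Polynomial in
lemma trace_pow_pred_eq_conj_trace {V : Type*} [AddCommGroup V] [Module ℂ V]
    [FiniteDimensional ℂ V] (u : Module.End ℂ V) (n : ℕ) (hn : 0 < n) (hu : u ^ n = 1) :
    LinearMap.trace ℂ V (u ^ (n - 1)) = (starRingEnd ℂ) (LinearMap.trace ℂ V u) := by
  classical
  have hsq : Squarefree ((X : ℂ[X]) ^ n - C 1) :=
    (Polynomial.separable_X_pow_sub_C (1 : ℂ)
      (by exact_mod_cast Nat.cast_ne_zero.mpr hn.ne') one_ne_zero).squarefree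
  have haev : Polynomial.aeval u ((X : ℂ[X]) ^ n - C 1) = 0 := by
    simp [map_sub, map_pow, hu]
  have hss : u.IsFinitelySemisimple :=
    (Module.End.isSemisimple_of_squarefree_aeval_eq_zero hsq haev).isFinitelySemisimple
  have hsup : ⨆ μ : ℂ, u.eigenspace μ = ⊤ := by
    have h1 := Module.End.iSup_maxGenEigenspace_eq_top u
    calc ⨆ μ : ℂ, u.eigenspace μ = ⨆ μ : ℂ, u.maxGenEigenspace μ := by
          refine iSup_congr fun μ => ?_
          exact (hss.maxGenEigenspace_eq_eigenspace μ).symm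
      _ = ⊤ := h1
  have hInt : DirectSum.IsInternal (fun μ : ℂ => u.eigenspace μ) :=
    (DirectSum.isInternal_submodule_iff_iSupIndep_and_iSup_eq_top _).mpr
      ⟨u.eigenspaces_iSupIndep, hsup⟩
  have hFin : {μ : ℂ | u.eigenspace μ ≠ ⊥}.Finite :=
    WellFoundedGT.finite_ne_bot_of_iSupIndep u.eigenspaces_iSupIndep
  have hev : ∀ (μ : ℂ) (k : ℕ), ∀ v ∈ u.eigenspace μ, (u ^ k) v = μ ^ k • v := by
    intro μ k
    induction k with
    | zero => intro v _; simp
    | succ m ih =>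
      intro v hv
      have h1 : u v = μ • v := Module.End.mem_eigenspace_iff.mp hv
      rw [pow_succ, Module.End.mul_apply, h1, map_smul, ih v hv, smul_smul, ← pow_succ']
  have hmap : ∀ (k : ℕ) (μ : ℂ), Set.MapsTo (u ^ k) (u.eigenspace μ) (u.eigenspace μ) := by
    intro k μ v hv
    have h1 : (u ^ k) v = μ ^ k • v := hev μ k v hv
    rw [SetLike.mem_coe, h1]
    exact Submodule.smul_mem _ _ hv
  have htr : ∀ (k : ℕ) (μ : ℂ),
      LinearMap.trace ℂ (u.eigenspace μ) ((u ^ k).restrict (hmap k μ)) =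
        μ ^ k * (Module.finrank ℂ (u.eigenspace μ) : ℂ) := by
    intro k μ
    have hres : (u ^ k).restrict (hmap k μ) = (μ ^ k) • (LinearMap.id (R := ℂ)) := by
      ext ⟨v, hv⟩
      exact hev μ k v hv
    rw [hres, map_smul, smul_eq_mul, LinearMap.trace_id]
  have hconj : ∀ μ : ℂ, u.eigenspace μ ≠ ⊥ → μ ^ (n - 1) = (starRingEnd ℂ) μ := by
    intro μ hμ
    obtain ⟨v, hv, hv0⟩ := Submodule.exists_mem_ne_zero_of_ne_bot hμ
    have h1 : (u ^ n) v = μ ^ n • v := hev μ n v hv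
    rw [hu] at h1
    have h2 : (μ ^ n - 1) • v = 0 := by
      rw [sub_smul, one_smul, ← h1]; simp
    have hroot : μ ^ n = 1 := by
      rcases smul_eq_zero.mp h2 with h | h
      · exact sub_eq_zero.mp h
      · exact absurd h hv0
    have hmul : μ ^ (n - 1) * μ = 1 := by
      rw [← pow_succ, Nat.sub_add_cancel hn]; exact hroot
    have hnn : ‖μ‖₊ ^ n = 1 := by
      rw [← nnnorm_pow, hroot, nnnorm_one]
    have habs : ‖μ‖ = 1 := by
      have h := (pow_eq_one_iff_left hn.ne').mp hnn
      simpa [coe_nnnorm] using congrArg NNReal.toReal h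
    rw [eq_inv_of_mul_eq_one_left hmul, Complex.inv_eq_conj habs]
  -- final computation
  have e1 := LinearMap.trace_eq_sum_trace_restrict' hInt hFin (hmap (n - 1))
  have e2 := LinearMap.trace_eq_sum_trace_restrict' hInt hFin (hmap 1)
  rw [e1, show (LinearMap.trace ℂ V) u = (LinearMap.trace ℂ V) (u ^ 1) by rw [pow_one], e2,
    map_sum]
  refine Finset.sum_congr rfl fun μ hμ => ?_
  have hμ' : u.eigenspace μ ≠ ⊥ := by simpa using (Set.Finite.mem_toFinset hFin).mp hμ
  rw [htr (n - 1) μ, htr 1 μ, pow_one, map_mul, hconj μ hμ', map_natCast]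

lemma char_inv_eq_conj {G : Type} [Group G] [Fintype G] (V : FDRep ℂ G) (g : G) :
    V.character g⁻¹ = (starRingEnd ℂ) (V.character g) := by
  have hn : 0 < orderOf g := orderOf_pos g
  have hpow : (V.ρ g) ^ orderOf g = 1 := by
    rw [← map_pow, pow_orderOf_eq_one, map_one]
  have hginv : g⁻¹ = g ^ (orderOf g - 1) := by
    apply eq_comm.mp
    apply eq_inv_of_mul_eq_one_left
    rw [← pow_succ, Nat.sub_add_cancel hn, pow_orderOf_eq_one]
  rw [hginv]
  show LinearMap.trace ℂ _ (V.ρ (g ^ (orderOf g - 1))) = (starRingEnd ℂ) (LinearMap.trace ℂ _ (V.ρ g))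
  rw [map_pow]
  exact trace_pow_pred_eq_conj_trace (V.ρ g) (orderOf g) hn hpow

lemma pow_apply_eq_sum_words {G : Type} [Group G] [DecidableEq G]
    (f : MonoidAlgebra ℂ G) : ∀ (d : ℕ) (σ : G),
    (f ^ d).coeff σ = ∑ w ∈ Finset.univ.filter
        (fun w : Fin d → {x // x ∈ f.coeff.support} => (List.ofFn fun j => ((w j : G))).prod = σ),
      ∏ j, f.coeff (w j : G) := by
  intro d
  induction d with
  | zero =>
    intro σ
    rw [Finset.sum_filter, pow_zero]
    simp only [List.ofFn_zero, List.prod_nil, Finset.univ_unique, Finset.prod_const,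
      Finset.sum_const]
    simp [MonoidAlgebra.one_def, Finsupp.single_apply, eq_comm]
  | succ e ih =>
    intro σ
    have hsum : ∀ (F : (Fin (e+1) → {x // x ∈ f.coeff.support}) → ℂ),
        ∑ w, F w = ∑ s : {x // x ∈ f.coeff.support}, ∑ w : Fin e → {x // x ∈ f.coeff.support},
          F (Fin.cons s w) := by
      intro F
      calc ∑ w, F w = ∑ p : {x // x ∈ f.coeff.support} × (Fin e → {x // x ∈ f.coeff.support}),
            F (Fin.cons p.1 p.2) :=
          (Fintype.sum_equiv (Fin.consEquiv fun _ => {x // x ∈ f.coeff.support})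
            (fun p => F (Fin.cons p.1 p.2)) F fun p => rfl).symm
        _ = _ := Fintype.sum_prod_type (f := fun p => F (Fin.cons p.1 p.2))
    rw [pow_succ', MonoidAlgebra.coeff_mul_apply_left, Finsupp.sum,
      ← Finset.sum_attach f.coeff.support (fun a => f.coeff a * (f ^ e).coeff ((a : G)⁻¹ * σ)),
      Finset.sum_filter, hsum]
    refine Finset.sum_congr rfl fun s _ => ?_
    rw [ih ((s : G)⁻¹ * σ), Finset.sum_filter, Finset.mul_sum]
    refine Finset.sum_congr rfl fun w _ => ?_
    have hcons : (List.ofFn fun j => ((Fin.cons (α := fun _ => {x // x ∈ f.coeff.support}) s w j) : G))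
        = (s : G) :: (List.ofFn fun j => ((w j : G))) := by
      rw [List.ofFn_succ]; simp
    have hprod : (∏ j, f.coeff ((Fin.cons (α := fun _ => {x // x ∈ f.coeff.support}) s w j) : G))
        = f.coeff (s : G) * ∏ j, f.coeff ((w j : G)) := by
      rw [Fin.prod_univ_succ]; simp
    rw [hcons, hprod, List.prod_cons]
    have hiff : ((s : G) * (List.ofFn fun j => ((w j : G))).prod = σ)
        ↔ ((List.ofFn fun j => ((w j : G))).prod = (s : G)⁻¹ * σ) := by
      constructor
      · intro h; rw [← h]; group
      · intro h; rw [h]; group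
    rw [if_congr hiff rfl rfl, mul_ite, mul_zero]


/-- **General method: multiplicities in tensor powers count weighted words in a Cayley graph.**
With the setup of the general method (a linearly independent family `z t` spanning `M`,
a multiplicatively closed subspace `Sig ⊆ M`, a linear `φ : M → ClassFun(G)` sending `z t`
to the irreducible character `lam t` and multiplicative on `Sig`), assume moreover each
`z t` is the 0/1-sum of a nonempty subset `Tset t ⊆ G`, the `Tset t` are pairwise disjoint,
and `f ∈ Sig` satisfies `φ f = χ_W`.  Then for every irreducible character `χ = X.character`,
every `d ≥ 1` and every choice `σsel t ∈ Tset t`, the multiplicity of `χ` in `W^{⊗d}` equals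
`∑_{t : lam t = χ} ∑_w ω(w)`, the inner sum over all words `w` of length `d` over
`supp f` with `w₁ ⋯ w_d = σsel t`, weighted by `ω(w) = ∏ ([w_j] f)`. -/
theorem multiplicity_in_tensor_power_eq_weighted_word_count
    {G : Type} [Group G] [Fintype G] [DecidableEq G]
    {T : Type} [Fintype T]
    (z : T → MonoidAlgebra ℂ G) (hz : LinearIndependent ℂ z)
    (M : Submodule ℂ (MonoidAlgebra ℂ G)) (hM : M = Submodule.span ℂ (Set.range z))
    (Sig : Submodule ℂ (MonoidAlgebra ℂ G)) (hSigM : Sig ≤ M)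
    (hSigmul : ∀ f g : MonoidAlgebra ℂ G, f ∈ Sig → g ∈ Sig → f * g ∈ Sig)
    (lam : T → (G → ℂ))
    (hlam : ∀ t, ∃ X : FDRep ℂ G, Simple X ∧ lam t = X.character)
    (φ : M →ₗ[ℂ] (G → ℂ))
    (hφz : ∀ t, φ ⟨z t, by rw [hM]; exact Submodule.subset_span (Set.mem_range_self t)⟩ = lam t)
    (hφmul : ∀ (f g : MonoidAlgebra ℂ G) (hf : f ∈ Sig) (hg : g ∈ Sig),
      φ ⟨f * g, hSigM (hSigmul f g hf hg)⟩ = φ ⟨f, hSigM hf⟩ * φ ⟨g, hSigM hg⟩)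
    (Tset : T → Finset G) (hTne : ∀ t, (Tset t).Nonempty)
    (hTdisj : ∀ t t', t ≠ t' → Disjoint (Tset t) (Tset t'))
    (hzT : ∀ t, z t = ∑ σ ∈ Tset t, MonoidAlgebra.single σ (1 : ℂ))
    (W : FDRep ℂ G) (f : MonoidAlgebra ℂ G) (hf : f ∈ Sig)
    (hφf : φ ⟨f, hSigM hf⟩ = W.character)
    (X : FDRep ℂ G) [Simple X]
    (d : ℕ) (hd : 1 ≤ d)
    (σsel : T → G) (hσsel : ∀ t, σsel t ∈ Tset t) :
    (Fintype.card G : ℂ)⁻¹ * ∑ g : G, (W.character g) ^ d * (starRingEnd ℂ) (X.character g) =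
      ∑ t ∈ Finset.univ.filter (fun t => lam t = X.character),
        ∑ w ∈ Finset.univ.filter
            (fun w : Fin d → {x // x ∈ f.coeff.support} =>
              (List.ofFn fun j => ((w j : G))).prod = σsel t),
          ∏ j : Fin d, f.coeff (w j : G) := by
  classical
  obtain ⟨e, rfl⟩ : ∃ e, d = e + 1 := ⟨d - 1, (Nat.succ_pred_eq_of_pos hd).symm⟩
  -- powers of `f` lie in `Sig`
  have hmem : ∀ k : ℕ, f ^ (k + 1) ∈ Sig := by
    intro k; induction k with
    | zero => simpa using hf
    | succ m ih => rw [pow_succ]; exact hSigmul _ _ ih hf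
  -- `φ` of powers
  have hchar : ∀ k : ℕ, (φ ⟨f ^ (k + 1), hSigM (hmem k)⟩ : G → ℂ)
      = fun g => (W.character g) ^ (k + 1) := by
    intro k; induction k with
    | zero =>
      have h1 : (⟨f ^ 1, hSigM (hmem 0)⟩ : M) = ⟨f, hSigM hf⟩ := Subtype.ext (pow_one f)
      rw [h1, hφf]; funext g; rw [pow_one]
    | succ m ih =>
      have h1 : (⟨f ^ (m + 1 + 1), hSigM (hmem (m + 1))⟩ : M)
          = ⟨f ^ (m + 1) * f, hSigM (hSigmul _ _ (hmem m) hf)⟩ :=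
        Subtype.ext (pow_succ f (m + 1))
      rw [h1, hφmul _ _ (hmem m) hf, ih, hφf]
      funext g
      simp only [Pi.mul_apply]
      ring
  have hzM : ∀ t, z t ∈ M := fun t => by
    rw [hM]; exact Submodule.subset_span (Set.mem_range_self t)
  have hφz' : ∀ t, φ ⟨z t, hzM t⟩ = lam t := fun t => hφz t
  obtain ⟨c, hc⟩ : ∃ c : T → ℂ, ∑ t, c t • z t = f ^ (e + 1) := by
    have h := hSigM (hmem e); rw [hM] at h
    exact (Submodule.mem_span_range_iff_exists_fun ℂ).mp h
  have hfd : (⟨f ^ (e + 1), hSigM (hmem e)⟩ : M) = ∑ t, c t • ⟨z t, hzM t⟩ := by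
    apply Subtype.ext
    show f ^ (e + 1) = ((∑ t, c t • (⟨z t, hzM t⟩ : M) : M) : MonoidAlgebra ℂ G)
    rw [← hc]
    simp
  -- pointwise expansion of the character power
  have hpt : ∀ g : G, (W.character g) ^ (e + 1) = ∑ t, c t * lam t g := by
    have h1 : (fun g => (W.character g) ^ (e + 1)) = ∑ t, c t • lam t := by
      rw [← hchar e, hfd, map_sum]
      refine Finset.sum_congr rfl fun t _ => ?_
      rw [map_smul, hφz' t]
    intro g
    have h2 := congrFun h1 g
    simpa [Finset.sum_apply, Pi.smul_apply, smul_eq_mul] using h2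
  -- coefficients are coefficients of the product
  have hct : ∀ t : T, c t = (f ^ (e + 1)).coeff (σsel t) := by
    intro t
    have h1 := congrArg (fun p : MonoidAlgebra ℂ G => p.coeff (σsel t)) hc
    rw [← h1, MonoidAlgebra.coeff_sum, Finset.sum_apply']
    have hz' : ∀ t' : T, (z t').coeff (σsel t) = if t' = t then 1 else 0 := by
      intro t'
      rw [hzT t', MonoidAlgebra.coeff_sum, Finset.sum_apply']
      simp only [MonoidAlgebra.single_apply]
      rw [Finset.sum_ite_eq' (Tset t') (σsel t) (fun _ => (1 : ℂ))]
      by_cases h : t' = t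
      · subst h; simp [hσsel t']
      · have hns : σsel t ∉ Tset t' := fun hmem' =>
          Finset.disjoint_left.mp (hTdisj t' t h) hmem' (hσsel t)
        simp [hns, h]
    have h2 : ∀ k : T, (c k • z k).coeff (σsel t) = c k * (z k).coeff (σsel t) := fun k => rfl
    simp only [h2, hz', mul_ite, mul_one, mul_zero]
    rw [Finset.sum_ite_eq' Finset.univ t c, if_pos (Finset.mem_univ t)]
  -- orthogonality
  haveI : Invertible ((Fintype.card G : ℂ)) :=
    invertibleOfNonzero (Nat.cast_ne_zero.mpr Fintype.card_ne_zero)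
  have hstep : ∀ (Z : FDRep ℂ G), Simple Z →
      (Fintype.card G : ℂ)⁻¹ * ∑ g : G, Z.character g * (starRingEnd ℂ) (X.character g)
        = if Nonempty (Z ≅ X) then 1 else 0 := by
    intro Z hZs
    haveI := hZs
    haveI : Invertible ((Nat.card G : ℂ)) :=
      invertibleOfNonzero (Nat.cast_ne_zero.mpr Nat.card_pos.ne')
    have h1 := FDRep.char_orthonormal (k := ℂ) (G := G) Z X
    rw [Nat.card_eq_fintype_card] at h1
    simp_rw [← char_inv_eq_conj X]
    exact h1
  have hortho : ∀ t : T,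
      (Fintype.card G : ℂ)⁻¹ * ∑ g : G, lam t g * (starRingEnd ℂ) (X.character g)
        = if lam t = X.character then 1 else 0 := by
    intro t
    obtain ⟨Y, hYs, hYc⟩ := hlam t
    by_cases hlx : lam t = X.character
    · rw [if_pos hlx, hlx, hstep X inferInstance, if_pos ⟨Iso.refl X⟩]
    · rw [if_neg hlx, hYc, hstep Y hYs, if_neg]
      rintro ⟨i⟩
      exact hlx (hYc.trans (FDRep.char_iso i))
  -- main computation
  have hLHS : (Fintype.card G : ℂ)⁻¹ *
      ∑ g : G, (W.character g) ^ (e + 1) * (starRingEnd ℂ) (X.character g)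
      = ∑ t ∈ Finset.univ.filter (fun t => lam t = X.character), c t := by
    calc (Fintype.card G : ℂ)⁻¹ *
        ∑ g : G, (W.character g) ^ (e + 1) * (starRingEnd ℂ) (X.character g)
        = (Fintype.card G : ℂ)⁻¹ *
          ∑ g : G, ∑ t, c t * (lam t g * (starRingEnd ℂ) (X.character g)) := by
          congr 1
          refine Finset.sum_congr rfl fun g _ => ?_
          rw [hpt g, Finset.sum_mul]
          exact Finset.sum_congr rfl fun t _ => (mul_assoc _ _ _)
      _ = ∑ g : G, ∑ t, (Fintype.card G : ℂ)⁻¹ *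
            (c t * (lam t g * (starRingEnd ℂ) (X.character g))) := by
          rw [Finset.mul_sum]
          exact Finset.sum_congr rfl fun g _ => Finset.mul_sum _ _ _
      _ = ∑ t, ∑ g : G, (Fintype.card G : ℂ)⁻¹ *
            (c t * (lam t g * (starRingEnd ℂ) (X.character g))) := Finset.sum_comm
      _ = ∑ t, c t * ((Fintype.card G : ℂ)⁻¹ *
            ∑ g : G, lam t g * (starRingEnd ℂ) (X.character g)) := by
          refine Finset.sum_congr rfl fun t _ => ?_
          rw [Finset.mul_sum, Finset.mul_sum]
          exact Finset.sum_congr rfl fun g _ => by ring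
      _ = ∑ t, c t * (if lam t = X.character then 1 else 0) := by
          exact Finset.sum_congr rfl fun t _ => by rw [hortho t]
      _ = ∑ t ∈ Finset.univ.filter (fun t => lam t = X.character), c t := by
          rw [Finset.sum_filter]
          exact Finset.sum_congr rfl fun t _ => by rw [mul_ite, mul_one, mul_zero]
  rw [hLHS]
  refine Finset.sum_congr rfl fun t _ => ?_
  rw [hct t]
  exact pow_apply_eq_sum_words f (e + 1) (σsel t)
end

section
/- Let n ≥ 2 and d ≥ 0. The dimension over ℂ of the space of S_n-invariant tensors in (ℂ^n)^{⊗d}, where ℂ^n carries the permutation action of S_n, equals the number of words of length d over the set {e} ∪ C_n (the identity together with the permutations with descent set {1}) that reduce to the identity permutation. -/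
/-- The cycle `σ_k = (1 k k-1 ⋯ 3 2)` of `S_n` (1-based: `σ_k(1) = k`,
`σ_k(i) = i-1` for `2 ≤ i ≤ k`, `σ_k(i) = i` for `i > k`), written 0-based on `Fin n`:
it sends `0 ↦ k-1`, `i ↦ i-1` for `1 ≤ i ≤ k-1`, and fixes `i ≥ k`. -/
def sigmaPerm (n k : ℕ) (hk : 2 ≤ k) (hkn : k ≤ n) : Equiv.Perm (Fin n) where
  toFun i := ⟨if (i : ℕ) = 0 then k - 1 else if (i : ℕ) ≤ k - 1 then (i : ℕ) - 1 else (i : ℕ),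
    by have := i.isLt; split_ifs <;> omega⟩
  invFun i := ⟨if (i : ℕ) = k - 1 then 0 else if (i : ℕ) < k - 1 then (i : ℕ) + 1 else (i : ℕ),
    by have := i.isLt; split_ifs <;> omega⟩
  left_inv := by
    intro i
    have := i.isLt
    apply Fin.ext
    simp only [Fin.val_mk]
    split_ifs <;> first
      | omega
      | (simp_all only [Fin.val_mk] <;> omega)
  right_inv := by
    intro i
    have := i.isLt
    apply Fin.ext
    simp only [Fin.val_mk]
    split_ifs <;> first
      | omega
      | (simp_all only [Fin.val_mk] <;> omega)

/-- The set `C_n = {σ_2, …, σ_n}` of the permutations of `{1, …, n}`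
whose descent set is `{1}`. -/
def Cn (n : ℕ) : Finset (Equiv.Perm (Fin n)) :=
  (Finset.Icc 2 n).attach.image fun k : {x // x ∈ Finset.Icc 2 n} =>
    sigmaPerm n k.1 (Finset.mem_Icc.mp k.2).1 (Finset.mem_Icc.mp k.2).2

/-- `D_{{1}}`: the sum of all permutations of `{1, …, n}` with descent set `{1}`,
as an element of the group algebra `ℚ[S_n]`. -/
noncomputable def Done (n : ℕ) : MonoidAlgebra ℚ (Equiv.Perm (Fin n)) :=
  ∑ σ ∈ Cn n, MonoidAlgebra.single σ (1 : ℚ)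

/-- The permutation representation of `S_n` on `ℂ^n`. -/
noncomputable def permRep (n : ℕ) : Representation ℂ (Equiv.Perm (Fin n)) (Fin n → ℂ) where
  toFun g := LinearMap.funLeft ℂ ℂ ⇑g⁻¹
  map_one' := by ext v i; simp
  map_mul' g h := by
    ext v i
    simp [LinearMap.funLeft_apply, Module.End.mul_apply, mul_inv_rev]

/-- The geometric module `V = {v ∈ ℂ^n : v_1 + ⋯ + v_n = 0}` as a subspace of `ℂ^n`. -/
noncomputable def geomSubmodule (n : ℕ) : Submodule ℂ (Fin n → ℂ) where
  carrier := {v | ∑ i, v i = 0}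
  add_mem' := by
    intro a b ha hb
    simp only [Set.mem_setOf_eq] at *
    simp [Finset.sum_add_distrib, ha, hb]
  zero_mem' := by simp
  smul_mem' := by
    intro c v hv
    simp only [Set.mem_setOf_eq, Pi.smul_apply, smul_eq_mul] at *
    rw [← Finset.mul_sum, hv, mul_zero]

lemma permRep_mem_geom (n : ℕ) (g : Equiv.Perm (Fin n)) :
    ∀ v ∈ geomSubmodule n, permRep n g v ∈ geomSubmodule n := by
  intro v hv
  have hv' : ∑ i, v i = 0 := hv
  show ∑ i, (permRep n g v) i = 0
  have : ∀ i, (permRep n g v) i = v (g⁻¹ i) := fun i => rfl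
  simp only [this]
  rw [Equiv.sum_comp g⁻¹ v]
  exact hv'

/-- The geometric representation of `S_n` on `V = {v ∈ ℂ^n : Σ v_i = 0}`,
by permutation of coordinates. -/
noncomputable def geomRep (n : ℕ) : Representation ℂ (Equiv.Perm (Fin n)) (geomSubmodule n) where
  toFun g := (permRep n g).restrict (permRep_mem_geom n g)
  map_one' := by
    refine LinearMap.ext fun v => Subtype.ext ?_
    simp [LinearMap.restrict_apply]
  map_mul' g h := by
    refine LinearMap.ext fun v => Subtype.ext ?_
    simp [LinearMap.restrict_apply, Module.End.mul_apply]

/-- The `d`-fold tensor power of a representation, with diagonal action. -/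
noncomputable def tpowRep {G V : Type*} [Group G] [AddCommGroup V] [Module ℂ V]
    (ρ : Representation ℂ G V) (d : ℕ) :
    Representation ℂ G (PiTensorProduct ℂ (fun _ : Fin d => V)) where
  toFun g := PiTensorProduct.map fun _ => ρ g
  map_one' := by
    show PiTensorProduct.map (fun _ : Fin d => ρ 1) = 1
    have : (fun _ : Fin d => ρ 1) = fun _ : Fin d => (1 : V →ₗ[ℂ] V) := by
      funext _; rw [map_one]
    rw [this, PiTensorProduct.map_one]
  map_mul' g h := by
    show PiTensorProduct.map (fun _ : Fin d => ρ (g * h)) =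
      PiTensorProduct.map (fun _ : Fin d => ρ g) * PiTensorProduct.map (fun _ : Fin d => ρ h)
    have : (fun _ : Fin d => ρ (g * h)) = fun _ : Fin d => ρ g * ρ h := by
      funext _; rw [map_mul]
    rw [this, PiTensorProduct.map_mul]

/-- The dimension over `ℂ` of the space of `G`-invariant tensors in the `d`-fold
tensor power `V^{⊗d}` (with diagonal `G`-action) of a representation `ρ` on `V`. -/
noncomputable def invariantDim {G V : Type*} [Group G] [AddCommGroup V] [Module ℂ V]
    (ρ : Representation ℂ G V) (d : ℕ) : ℕ :=
  Module.finrank ℂ ((tpowRep ρ d).invariants)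


set_option linter.unusedSectionVars false
set_option maxHeartbeats 1000000

open Finset

theorem Equiv.Perm.apply_inv_self {α : Type*} (f : Equiv.Perm α) (x : α) : f (f⁻¹ x) = x :=
  f.apply_symm_apply x

theorem Equiv.Perm.inv_apply_self {α : Type*} (f : Equiv.Perm α) (x : α) : f⁻¹ (f x) = x :=
  f.symm_apply_apply x

noncomputable def evalML (n d : ℕ) :
    MultilinearMap ℂ (fun _ : Fin d => (Fin n → ℂ)) ((Fin d → Fin n) → ℂ) :=
  MultilinearMap.pi fun f => (MultilinearMap.mkPiAlgebra ℂ (Fin d) ℂ).compLinearMap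
    fun j => LinearMap.proj (f j)

lemma evalML_apply (n d : ℕ) (v : ∀ _ : Fin d, Fin n → ℂ) (f : Fin d → Fin n) :
    evalML n d v f = ∏ j, v j (f j) := by
  simp [evalML]

lemma single_pi (n d : ℕ) (f f' : Fin d → Fin n) :
    (∏ j, (Pi.single (f j) (1:ℂ) : Fin n → ℂ) (f' j)) = if f' = f then 1 else 0 := by
  by_cases h : f' = f
  · subst h; simp
  · rw [if_neg h]
    obtain ⟨j, hj⟩ := Function.ne_iff.mp h
    exact Finset.prod_eq_zero (mem_univ j) (by simp [Pi.single_apply, hj])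

lemma single_sum (n : ℕ) (v : Fin n → ℂ) : v = ∑ x, v x • (Pi.single x (1:ℂ) : Fin n → ℂ) := by
  funext y
  simp [Pi.single_apply, Finset.sum_ite_eq' , mul_comm]

noncomputable def tensorEquivFun (n d : ℕ) :
    (PiTensorProduct ℂ fun _ : Fin d => (Fin n → ℂ)) ≃ₗ[ℂ] ((Fin d → Fin n) → ℂ) :=
  LinearEquiv.ofLinear (PiTensorProduct.lift (evalML n d))
    ((Pi.basisFun ℂ (Fin d → Fin n)).constr ℂ fun f =>
      PiTensorProduct.tprod ℂ fun j => Pi.single (f j) 1)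
    (by
      apply (Pi.basisFun ℂ (Fin d → Fin n)).ext
      intro f
      rw [LinearMap.comp_apply, Module.Basis.constr_basis, LinearMap.id_apply,
        PiTensorProduct.lift.tprod]
      funext f'
      rw [evalML_apply, single_pi, Pi.basisFun_apply, Pi.single_apply])
    (by
      apply PiTensorProduct.ext
      apply MultilinearMap.ext
      intro v
      rw [LinearMap.compMultilinearMap_apply, LinearMap.comp_apply,
        PiTensorProduct.lift.tprod, LinearMap.compMultilinearMap_apply, LinearMap.id_apply]
      rw [Module.Basis.constr_apply_fintype]
      have hv : (PiTensorProduct.tprod ℂ (s := fun _ : Fin d => (Fin n → ℂ))) v =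
          ∑ f : Fin d → Fin n, (∏ j, v j (f j)) •
            PiTensorProduct.tprod ℂ (fun j => (Pi.single (f j) (1:ℂ) : Fin n → ℂ)) := by
        conv_lhs =>
          rw [show (v : ∀ _ : Fin d, Fin n → ℂ)
              = fun j => ∑ x, v j x • (Pi.single x (1:ℂ) : Fin n → ℂ) by
            funext j; exact single_sum n (v j)]
        rw [MultilinearMap.map_sum]
        exact Finset.sum_congr rfl fun f _ => MultilinearMap.map_smul_univ _ _ _
      rw [hv]
      apply Finset.sum_congr rfl
      intro f _
      simp [evalML_apply])

noncomputable def tensorBasis (n d : ℕ) :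
    Module.Basis (Fin d → Fin n) ℂ (PiTensorProduct ℂ fun _ : Fin d => (Fin n → ℂ)) :=
  (Pi.basisFun ℂ (Fin d → Fin n)).map (tensorEquivFun n d).symm

lemma tensorBasis_apply (n d : ℕ) (f : Fin d → Fin n) :
    tensorBasis n d f = PiTensorProduct.tprod ℂ fun j => Pi.single (f j) 1 := by
  rw [tensorBasis, Module.Basis.map_apply, tensorEquivFun, LinearEquiv.ofLinear_symm_apply,
    Pi.basisFun_apply]
  have : (Pi.single f (1:ℂ) : (Fin d → Fin n) → ℂ) = Pi.basisFun ℂ (Fin d → Fin n) f := by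
    rw [Pi.basisFun_apply]
  rw [this, Module.Basis.constr_basis]

section general
open MulAction Finset

variable {G ι M : Type*} [Group G] [Fintype ι] [MulAction G ι] [DecidableEq ι]
  [AddCommGroup M] [Module ℂ M]

lemma repr_rho (ρ : Representation ℂ G M) (b : Module.Basis ι ℂ M)
    (hb : ∀ g i, ρ g (b i) = b (g • i)) (g : G) (v : M) (j : ι) :
    b.repr (ρ g v) j = b.repr v (g⁻¹ • j) := by
  have h : (Finsupp.lapply j).comp (b.repr.toLinearMap.comp (ρ g)) =
      (Finsupp.lapply (g⁻¹ • j)).comp b.repr.toLinearMap := by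
    apply Module.Basis.ext b
    intro i
    simp only [LinearMap.comp_apply, hb, LinearEquiv.coe_toLinearMap, Module.Basis.repr_self,
      Finsupp.lapply_apply, Finsupp.single_apply]
    exact if_congr (by rw [smul_eq_iff_eq_inv_smul, eq_comm]) rfl rfl
  exact DFunLike.congr_fun h v

lemma repr_const_of_invariant (ρ : Representation ℂ G M) (b : Module.Basis ι ℂ M)
    (hb : ∀ g i, ρ g (b i) = b (g • i)) {v : M} (hv : ∀ g : G, ρ g v = v) (g : G) (i : ι) :
    b.repr v (g • i) = b.repr v i := by
  conv_rhs => rw [← hv g⁻¹, repr_rho ρ b hb, inv_inv]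

lemma finrank_invariants_eq_card_orbits (ρ : Representation ℂ G M) (b : Module.Basis ι ℂ M)
    (hb : ∀ g i, ρ g (b i) = b (g • i)) :
    Module.finrank ℂ ρ.invariants = Nat.card (orbitRel.Quotient G ι) := by
  classical
  letI : Fintype (orbitRel.Quotient G ι) := Fintype.ofFinite _
  let qmk : ι → orbitRel.Quotient G ι := Quotient.mk (orbitRel G ι)
  have hqmk : ∀ (g : G) (i : ι), qmk (g • i) = qmk i := by
    intro g i
    exact Quotient.sound ((orbitRel_apply).mpr (mem_orbit i g))
  have hmem : ∀ c : orbitRel.Quotient G ι → ℂ, (∑ i, c (qmk i) • b i) ∈ ρ.invariants := by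
    intro c
    rw [Representation.mem_invariants]
    intro g
    rw [map_sum]
    simp only [map_smul, hb]
    exact Fintype.sum_equiv (MulAction.toPerm g) _ _
      (fun i => by rw [MulAction.toPerm_apply, hqmk])
  let Φlin : ((orbitRel.Quotient G ι) → ℂ) →ₗ[ℂ] M :=
    { toFun := fun c => ∑ i, c (qmk i) • b i
      map_add' := fun c c' => by simp [add_smul, Finset.sum_add_distrib]
      map_smul' := fun r c => by simp [Finset.smul_sum, smul_smul] }
  let Φ : ((orbitRel.Quotient G ι) → ℂ) →ₗ[ℂ] ρ.invariants := Φlin.codRestrict _ hmem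
  let Ψ : ρ.invariants →ₗ[ℂ] ((orbitRel.Quotient G ι) → ℂ) :=
    LinearMap.pi fun q => (Finsupp.lapply (Quotient.out q)).comp
      (b.repr.toLinearMap.comp (ρ.invariants.subtype))
  have h1 : Ψ.comp Φ = LinearMap.id := by
    apply LinearMap.ext
    intro c
    funext q
    show b.repr (∑ i, c (qmk i) • b i) (Quotient.out q) = c q
    rw [map_sum]
    simp only [map_smul, Module.Basis.repr_self, Finsupp.smul_single, smul_eq_mul, mul_one]
    rw [Finsupp.finset_sum_apply]
    simp only [Finsupp.single_apply]
    rw [Finset.sum_ite_eq' univ (Quotient.out q) (fun i => c (qmk i))]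
    simp only [mem_univ, if_true]
    congr 1
    exact Quotient.out_eq q
  have h2 : Φ.comp Ψ = LinearMap.id := by
    apply LinearMap.ext
    intro v
    apply Subtype.ext
    show ∑ i, b.repr v.1 (Quotient.out (qmk i)) • b i = v.1
    have hv : ∀ g : G, ρ g v.1 = v.1 := (Representation.mem_invariants _ _).mp v.2
    have : ∀ i : ι, b.repr v.1 (Quotient.out (qmk i)) = b.repr v.1 i := by
      intro i
      have hrel : (Quotient.out (qmk i)) ∈ orbit G i := by
        rw [← orbitRel_apply]
        exact Quotient.mk_out (s := orbitRel G ι) i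
      obtain ⟨g, hg⟩ := MulAction.mem_orbit_iff.mp hrel
      rw [← hg]
      exact repr_const_of_invariant ρ b hb hv g i
    simp only [this]
    exact Module.Basis.sum_repr b v.1
  have e : ρ.invariants ≃ₗ[ℂ] ((orbitRel.Quotient G ι) → ℂ) :=
    LinearEquiv.ofLinear Ψ Φ h1 h2
  rw [e.finrank_eq, Module.finrank_fintype_fun_eq_card, Nat.card_eq_fintype_card]

end general

section equivariance
open MulAction

lemma permRep_single (n : ℕ) (g : Equiv.Perm (Fin n)) (x : Fin n) :
    permRep n g (Pi.single x (1:ℂ)) = Pi.single (g x) (1:ℂ) := by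
  funext j
  show (Pi.single x (1:ℂ) : Fin n → ℂ) (g⁻¹ j) = (Pi.single (g x) (1:ℂ) : Fin n → ℂ) j
  simp only [Pi.single_apply]
  exact if_congr (by rw [Equiv.Perm.inv_eq_iff_eq, eq_comm]) rfl rfl

lemma tpow_basis_smul (n d : ℕ) (g : Equiv.Perm (Fin n)) (f : Fin d → Fin n) :
    tpowRep (permRep n) d g (tensorBasis n d f) = tensorBasis n d (g • f) := by
  rw [tensorBasis_apply, tensorBasis_apply]
  show PiTensorProduct.map (fun _ => permRep n g) _ = _
  rw [PiTensorProduct.map_tprod]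
  congr 1
  funext j
  rw [permRep_single]
  rfl

lemma invariantDim_eq_card_orbits (n d : ℕ) :
    invariantDim (permRep n) d =
      Nat.card (orbitRel.Quotient (Equiv.Perm (Fin n)) (Fin d → Fin n)) :=
  finrank_invariants_eq_card_orbits _ (tensorBasis n d) (tpow_basis_smul n d)

end equivariance
set_option linter.unusedSectionVars false
open Finset MulAction Equiv

section words

variable {n d : ℕ}

lemma mem_S_elim {s : Equiv.Perm (Fin n)} (hs : s ∈ insert (1 : Equiv.Perm (Fin n)) (Cn n)) :
    s = 1 ∨ ∃ (k : ℕ) (hk : 2 ≤ k) (hkn : k ≤ n), s = sigmaPerm n k hk hkn := by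
  rcases Finset.mem_insert.mp hs with h | h
  · exact Or.inl h
  · right
    obtain ⟨k, _, hk⟩ := Finset.mem_image.mp h
    exact ⟨k.1, (Finset.mem_Icc.mp k.2).1, (Finset.mem_Icc.mp k.2).2, hk.symm⟩

lemma sigmaPerm_zero_val (k : ℕ) (hk : 2 ≤ k) (hkn : k ≤ n) (h0 : 0 < n) :
    ((sigmaPerm n k hk hkn ⟨0, h0⟩ : Fin n) : ℕ) = k - 1 := by
  simp [sigmaPerm]

lemma sigmaPerm_inv_val (k : ℕ) (hk : 2 ≤ k) (hkn : k ≤ n) (x : Fin n) :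
    (((sigmaPerm n k hk hkn)⁻¹ x : Fin n) : ℕ) =
      if (x : ℕ) = k - 1 then 0 else if (x : ℕ) < k - 1 then (x : ℕ) + 1 else (x : ℕ) := by
  rw [Equiv.Perm.inv_def]
  simp [sigmaPerm]

lemma s_inv_apply {s : Equiv.Perm (Fin n)}
    (hs : s ∈ insert (1 : Equiv.Perm (Fin n)) (Cn n)) (h0 : 0 < n) (x : Fin n) :
    ((s⁻¹ x : Fin n) : ℕ) =
      if (x : ℕ) = ((s ⟨0, h0⟩ : Fin n) : ℕ) then 0
      else if (x : ℕ) < ((s ⟨0, h0⟩ : Fin n) : ℕ) then (x : ℕ) + 1 else (x : ℕ) := by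
  rcases mem_S_elim hs with h | ⟨k, hk, hkn, h⟩
  · subst h
    simp only [Equiv.Perm.one_apply, inv_one]
    have hx := x.isLt
    split_ifs with h1 h2
    · simp [h1]
    · simp [h1]
  · subst h
    rw [sigmaPerm_inv_val, sigmaPerm_zero_val]

lemma s_eq_of_zero_eq {s₁ s₂ : Equiv.Perm (Fin n)}
    (h1 : s₁ ∈ insert (1 : Equiv.Perm (Fin n)) (Cn n))
    (h2 : s₂ ∈ insert (1 : Equiv.Perm (Fin n)) (Cn n)) (h0 : 0 < n)
    (h : s₁ ⟨0, h0⟩ = s₂ ⟨0, h0⟩) : s₁ = s₂ := by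
  have : s₁⁻¹ = s₂⁻¹ := by
    apply Equiv.ext
    intro x
    apply Fin.ext
    rw [s_inv_apply h1 h0, s_inv_apply h2 h0, h]
  exact inv_injective this

lemma one_not_mem_Cn (hn : 2 ≤ n) : (1 : Equiv.Perm (Fin n)) ∉ Cn n := by
  intro h
  have h0 : 0 < n := by omega
  obtain ⟨k, _, hk⟩ := Finset.mem_image.mp h
  have hk2 := (Finset.mem_Icc.mp k.2).1
  have h1 := congrArg Fin.val (DFunLike.congr_fun hk (⟨0, h0⟩ : Fin n))
  rw [sigmaPerm_zero_val _ _ _ h0] at h1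
  simp only [Equiv.Perm.one_apply] at h1
  omega

lemma card_S (hn : 2 ≤ n) : (insert (1 : Equiv.Perm (Fin n)) (Cn n)).card = n := by
  have h0 : 0 < n := by omega
  have hCn : (Cn n).card = n - 1 := by
    rw [Cn, Finset.card_image_of_injective _ ?_, Finset.card_attach, Nat.card_Icc]
    · omega
    · intro k₁ k₂ h
      have h1 := congrArg Fin.val (DFunLike.congr_fun h (⟨0, h0⟩ : Fin n))
      rw [sigmaPerm_zero_val _ _ _ h0, sigmaPerm_zero_val _ _ _ h0] at h1
      have := (Finset.mem_Icc.mp k₁.2).1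
      have := (Finset.mem_Icc.mp k₂.2).1
      exact Subtype.ext (by omega)
  rw [Finset.card_insert_of_notMem (one_not_mem_Cn hn), hCn]
  omega

/-- partial products -/
def gw (w : Fin d → {x // x ∈ insert (1 : Equiv.Perm (Fin n)) (Cn n)}) (i : ℕ) :
    Equiv.Perm (Fin n) :=
  ((List.ofFn fun j => (w j : Equiv.Perm (Fin n))).take i).prod

lemma gw_zero (w : Fin d → {x // x ∈ insert (1 : Equiv.Perm (Fin n)) (Cn n)}) :
    gw w 0 = 1 := rfl

lemma gw_succ (w : Fin d → {x // x ∈ insert (1 : Equiv.Perm (Fin n)) (Cn n)})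
    (i : ℕ) (hi : i < d) :
    gw w (i + 1) = gw w i * (w ⟨i, hi⟩ : Equiv.Perm (Fin n)) := by
  unfold gw
  rw [List.prod_take_succ _ i (by simpa using hi)]
  congr 1
  rw [List.getElem_ofFn]

lemma gw_d (w : Fin d → {x // x ∈ insert (1 : Equiv.Perm (Fin n)) (Cn n)}) :
    (List.ofFn fun j => (w j : Equiv.Perm (Fin n))).prod = gw w d := by
  unfold gw
  rw [List.take_of_length_le (by simp)]

/-- the top-card sequence -/
def Fw (h0 : 0 < n) (w : Fin d → {x // x ∈ insert (1 : Equiv.Perm (Fin n)) (Cn n)})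
    (i : Fin d) : Fin n :=
  gw w ((i : ℕ) + 1) ⟨0, h0⟩

/-- `u` occurs among the first `i` values of `f` -/
def touched (f : Fin d → Fin n) (i : ℕ) (u : Fin n) : Prop :=
  ∃ j : Fin d, (j : ℕ) < i ∧ f j = u

instance (f : Fin d → Fin n) (i : ℕ) (u : Fin n) : Decidable (touched f i u) := by
  unfold touched; infer_instance

/-- last occurrence of `u` among the first `i` values of `f` -/
def lastO (f : Fin d → Fin n) (i : ℕ) (u : Fin n) : ℕ :=
  Nat.findGreatest (fun j => j < i ∧ ∃ hj : j < d, f ⟨j, hj⟩ = u) i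

def keyP (f : Fin d → Fin n) (i : ℕ) (u : Fin n) : ℕ :=
  if touched f i u then n + lastO f i u else n - 1 - (u : ℕ)

lemma lastO_spec {f : Fin d → Fin n} {i : ℕ} {u : Fin n} (H : touched f i u) :
    lastO f i u < i ∧ ∃ h : lastO f i u < d, f ⟨lastO f i u, h⟩ = u := by
  obtain ⟨j, hj, hf⟩ := H
  exact Nat.findGreatest_spec (P := fun j => j < i ∧ ∃ hj : j < d, f ⟨j, hj⟩ = u)
    (m := (j : ℕ)) hj.le ⟨hj, j.isLt, by simpa using hf⟩

lemma lastO_ge {f : Fin d → Fin n} {i : ℕ} {u : Fin n} (j : ℕ) (hjd : j < d) (hj : j < i)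
    (hf : f ⟨j, hjd⟩ = u) : j ≤ lastO f i u :=
  Nat.le_findGreatest (P := fun j => j < i ∧ ∃ hj : j < d, f ⟨j, hj⟩ = u)
    hj.le ⟨hj, hjd, hf⟩

lemma keyP_lt (h0 : 0 < n) (f : Fin d → Fin n) (i : ℕ) (u : Fin n) :
    keyP f i u < n + i := by
  unfold keyP
  split_ifs with h
  · exact Nat.add_lt_add_left (lastO_spec h).1 n
  · have := u.isLt
    omega

lemma keyP_touched_ge {f : Fin d → Fin n} {i : ℕ} {u : Fin n} (H : touched f i u) :
    n ≤ keyP f i u := by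
  unfold keyP; rw [if_pos H]; omega

lemma keyP_untouched {f : Fin d → Fin n} {i : ℕ} {u : Fin n} (H : ¬ touched f i u) :
    keyP f i u = n - 1 - (u : ℕ) := by
  unfold keyP; rw [if_neg H]

lemma keyP_zero (f : Fin d → Fin n) (u : Fin n) : keyP f 0 u = n - 1 - (u : ℕ) :=
  keyP_untouched (by rintro ⟨j, hj, -⟩; omega)

lemma touched_succ {f : Fin d → Fin n} {i : ℕ} {hi : i < d} {u : Fin n}
    (hne : f ⟨i, hi⟩ ≠ u) : touched f (i + 1) u ↔ touched f i u := by
  constructor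
  · rintro ⟨j, hj, hf⟩
    refine ⟨j, ?_, hf⟩
    rcases Nat.lt_succ_iff_lt_or_eq.mp hj with h | h
    · exact h
    · exact absurd hf (by rwa [show j = ⟨i, hi⟩ from Fin.ext h])
  · rintro ⟨j, hj, hf⟩
    exact ⟨j, by omega, hf⟩

lemma keyP_succ_ne {f : Fin d → Fin n} {i : ℕ} (hi : i < d) {u : Fin n}
    (hne : f ⟨i, hi⟩ ≠ u) : keyP f (i + 1) u = keyP f i u := by
  by_cases h : touched f i u
  · unfold keyP
    rw [if_pos ((touched_succ hne).mpr h), if_pos h]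
    have h' : touched f (i + 1) u := (touched_succ hne).mpr h
    congr 1
    apply le_antisymm
    · obtain ⟨hlt, hd, hval⟩ := lastO_spec h'
      have hne' : lastO f (i + 1) u ≠ i := by
        intro he
        exact hne (by rwa [show (⟨i, hi⟩ : Fin d) = ⟨lastO f (i+1) u, hd⟩ from Fin.ext he.symm])
      exact lastO_ge _ hd (by omega) hval
    · obtain ⟨hlt, hd, hval⟩ := lastO_spec h
      exact lastO_ge _ hd (by omega) hval
  · unfold keyP
    rw [if_neg (fun hh => h ((touched_succ hne).mp hh)), if_neg h]

lemma keyP_succ_self {f : Fin d → Fin n} {i : ℕ} (hi : i < d) :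
    keyP f (i + 1) (f ⟨i, hi⟩) = n + i := by
  have H : touched f (i + 1) (f ⟨i, hi⟩) := ⟨⟨i, hi⟩, Nat.lt_succ_self i, rfl⟩
  unfold keyP
  rw [if_pos H]
  congr 1
  have h1 := (lastO_spec H).1
  have h2 := lastO_ge (f := f) (i := i + 1) i hi (by omega) rfl
  omega

end words
section words2
open Finset MulAction Equiv

variable {n d : ℕ}

lemma perm_eq_one_of_strictMono (p : Equiv.Perm (Fin n)) (h : StrictMono ⇑p) : p = 1 := by
  have h2 : StrictMono ⇑p⁻¹ := by
    intro u v huv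
    rcases lt_trichotomy (p⁻¹ u) (p⁻¹ v) with h' | h' | h'
    · exact h'
    · exact absurd (Equiv.injective p⁻¹ h') huv.ne
    · have := h h'
      rw [Equiv.Perm.apply_inv_self, Equiv.Perm.apply_inv_self] at this
      exact absurd huv (not_lt.mpr this.le)
  apply Equiv.ext
  intro x
  haveI : WellFoundedLT (Fin n) := Finite.to_wellFoundedLT
  have ha : x ≤ p x := h.le_apply
  have hb : x ≤ p⁻¹ x := h2.le_apply
  have hc : p x ≤ p (p⁻¹ x) := h.monotone hb
  rw [Equiv.Perm.apply_inv_self] at hc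
  rw [Equiv.Perm.one_apply]
  exact le_antisymm hc ha

lemma invariant (h0 : 0 < n) (w : Fin d → {x // x ∈ insert (1 : Equiv.Perm (Fin n)) (Cn n)}) :
    ∀ i, i ≤ d → ∀ u v : Fin n,
      ((gw w i)⁻¹ u < (gw w i)⁻¹ v ↔ keyP (Fw h0 w) i v < keyP (Fw h0 w) i u) := by
  intro i
  induction i with
  | zero =>
    intro _ u v
    rw [gw_zero, keyP_zero, keyP_zero]
    simp only [inv_one, Equiv.Perm.one_apply]
    rw [Fin.lt_def]
    have := u.isLt
    have := v.isLt
    omega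
  | succ i ih =>
    intro hid u v
    have hi : i < d := hid
    have IH := ih hi.le
    set f : Fin d → Fin n := Fw h0 w with hf
    set s : Equiv.Perm (Fin n) := (w ⟨i, hi⟩ : Equiv.Perm (Fin n)) with hs
    have hgs : gw w (i + 1) = gw w i * s := gw_succ w i hi
    set c : Fin n := f ⟨i, hi⟩ with hcdef
    have hcz : gw w (i + 1) ⟨0, h0⟩ = c := rfl
    set t : Fin n := s ⟨0, h0⟩ with ht
    have hct : (gw w i)⁻¹ c = t := by
      rw [← hcz, hgs, Equiv.Perm.mul_apply, Equiv.Perm.inv_apply_self]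
    have hpos : ∀ x, (gw w (i + 1))⁻¹ x = s⁻¹ ((gw w i)⁻¹ x) := by
      intro x
      rw [hgs, mul_inv_rev, Equiv.Perm.mul_apply]
    have hczero : (gw w (i + 1))⁻¹ c = ⟨0, h0⟩ := by
      rw [← hcz, Equiv.Perm.inv_apply_self]
    have hsinv : ∀ x : Fin n, ((s⁻¹ x : Fin n) : ℕ) =
        if (x : ℕ) = (t : ℕ) then 0 else if (x : ℕ) < (t : ℕ) then (x : ℕ) + 1 else (x : ℕ) :=
      s_inv_apply (w ⟨i, hi⟩).2 h0
    have horder : ∀ x y : Fin n, x ≠ c → y ≠ c →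
        ((gw w (i + 1))⁻¹ x < (gw w (i + 1))⁻¹ y ↔ (gw w i)⁻¹ x < (gw w i)⁻¹ y) := by
      intro x y hx hy
      have hxt : ((gw w i)⁻¹ x : ℕ) ≠ (t : ℕ) := fun hh =>
        hx (Equiv.injective (gw w i)⁻¹ (by rw [hct]; exact Fin.ext hh))
      have hyt : ((gw w i)⁻¹ y : ℕ) ≠ (t : ℕ) := fun hh =>
        hy (Equiv.injective (gw w i)⁻¹ (by rw [hct]; exact Fin.ext hh))
      rw [hpos, hpos, Fin.lt_def, Fin.lt_def, hsinv, hsinv]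
      split_ifs <;> omega
    by_cases hu : u = c <;> by_cases hv : v = c
    · subst hu; subst hv; simp
    · subst hu
      have h1 : keyP f (i + 1) c = n + i := keyP_succ_self hi
      have h2 : keyP f (i + 1) v = keyP f i v := keyP_succ_ne hi (fun hh => hv hh.symm)
      have h3 : keyP f i v < n + i := keyP_lt h0 f i v
      refine iff_of_true ?_ ?_
      · rw [hczero, Fin.lt_def]
        have : (gw w (i + 1))⁻¹ v ≠ ⟨0, h0⟩ := fun hh =>
          hv (Equiv.injective (gw w (i + 1))⁻¹ (by rw [hczero, hh]))
        have hvv := ((gw w (i + 1))⁻¹ v).isLt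
        have h5 : ((gw w (i + 1))⁻¹ v : ℕ) ≠ 0 := fun hh => this (Fin.ext hh)
        have h6 : ((⟨0, h0⟩ : Fin n) : ℕ) = 0 := rfl
        omega
      · rw [h1, h2]; exact h3
    · subst hv
      have h1 : keyP f (i + 1) c = n + i := keyP_succ_self hi
      have h2 : keyP f (i + 1) u = keyP f i u := keyP_succ_ne hi (fun hh => hu hh.symm)
      have h3 : keyP f i u < n + i := keyP_lt h0 f i u
      refine iff_of_false ?_ ?_
      · rw [hczero, Fin.lt_def]
        have h6 : ((⟨0, h0⟩ : Fin n) : ℕ) = 0 := rfl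
        omega
      · rw [h1, h2]; omega
    · rw [keyP_succ_ne hi (u := u) (fun hh => hu hh.symm), keyP_succ_ne hi (u := v) (fun hh => hv hh.symm),
        horder u v hu hv]
      exact IH u v

lemma prod_one_iff (h0 : 0 < n) (w : Fin d → {x // x ∈ insert (1 : Equiv.Perm (Fin n)) (Cn n)}) :
    (List.ofFn fun j => (w j : Equiv.Perm (Fin n))).prod = 1 ↔
      ∀ u v : Fin n, u < v ↔ keyP (Fw h0 w) d v < keyP (Fw h0 w) d u := by
  rw [gw_d]
  have I := invariant h0 w d le_rfl
  constructor
  · intro h u v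
    have := I u v
    rw [h] at this
    simpa using this
  · intro h
    have hiff : ∀ u v : Fin n, (gw w d)⁻¹ u < (gw w d)⁻¹ v ↔ u < v :=
      fun u v => (I u v).trans (h u v).symm
    have : (gw w d)⁻¹ = 1 :=
      perm_eq_one_of_strictMono _ (fun u v huv => (hiff u v).mpr huv)
    exact inv_eq_one.mp this

end words2
section words3
open Finset MulAction Equiv

variable {n d : ℕ}

lemma Fw_injective (h0 : 0 < n) :
    Function.Injective (Fw (d := d) h0) := by
  intro w w' h
  have key : ∀ i : ℕ, i ≤ d → gw w i = gw w' i ∧ ∀ j : Fin d, (j : ℕ) < i → w j = w' j := by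
    intro i
    induction i with
    | zero => exact fun _ => ⟨rfl, fun j hj => absurd hj (by omega)⟩
    | succ i ih =>
      intro hid
      have hi : i < d := hid
      obtain ⟨hg, hw⟩ := ih hi.le
      have h1 : gw w (i + 1) ⟨0, h0⟩ = gw w' (i + 1) ⟨0, h0⟩ := by
        have := congrFun h ⟨i, hi⟩
        exact this
      rw [gw_succ w i hi, gw_succ w' i hi, Equiv.Perm.mul_apply, Equiv.Perm.mul_apply, hg] at h1
      have h2 : (w ⟨i, hi⟩ : Equiv.Perm (Fin n)) ⟨0, h0⟩ =
          (w' ⟨i, hi⟩ : Equiv.Perm (Fin n)) ⟨0, h0⟩ := Equiv.injective _ h1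
      have h3 : w ⟨i, hi⟩ = w' ⟨i, hi⟩ :=
        Subtype.ext (s_eq_of_zero_eq (w ⟨i, hi⟩).2 (w' ⟨i, hi⟩).2 h0 h2)
      refine ⟨?_, ?_⟩
      · rw [gw_succ w i hi, gw_succ w' i hi, hg, h3]
      · intro j hj
        rcases Nat.lt_succ_iff_lt_or_eq.mp hj with hj' | hj'
        · exact hw j hj'
        · rw [show j = ⟨i, hi⟩ from Fin.ext hj']; exact h3
  funext j
  exact (key d le_rfl).2 j j.isLt

/-- the canonical-form predicate -/
def KeyDec (f : Fin d → Fin n) : Prop :=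
  ∀ u v : Fin n, u < v ↔ keyP f d v < keyP f d u

noncomputable def FwEquiv (hn : 2 ≤ n) :
    (Fin d → {x // x ∈ insert (1 : Equiv.Perm (Fin n)) (Cn n)}) ≃ (Fin d → Fin n) := by
  have h0 : 0 < n := by omega
  refine Equiv.ofBijective (Fw h0) ((Fintype.bijective_iff_injective_and_card _).mpr
    ⟨Fw_injective h0, ?_⟩)
  rw [Fintype.card_fun, Fintype.card_fun, Fintype.card_coe, card_S hn, Fintype.card_fin,
    Fintype.card_fin]

noncomputable def wordEquiv (hn : 2 ≤ n) :
    {w : Fin d → {x // x ∈ insert (1 : Equiv.Perm (Fin n)) (Cn n)} //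
        (List.ofFn fun i => ((w i : Equiv.Perm (Fin n)))).prod = 1} ≃
      {f : Fin d → Fin n // KeyDec f} :=
  (FwEquiv hn).subtypeEquiv fun w => by
    have h0 : 0 < n := by omega
    exact prod_one_iff h0 w

end words3
section words4
open Finset MulAction Equiv

variable {n d : ℕ}

lemma smul_pi_apply (g : Equiv.Perm (Fin n)) (f : Fin d → Fin n) (j : Fin d) :
    (g • f) j = g (f j) := rfl

lemma touched_smul (g : Equiv.Perm (Fin n)) (f : Fin d → Fin n) (u : Fin n) :
    touched (g • f) d (g u) ↔ touched f d u := by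
  constructor
  · rintro ⟨j, hj, hf⟩
    exact ⟨j, hj, Equiv.injective g (by rw [← smul_pi_apply g f j, hf])⟩
  · rintro ⟨j, hj, hf⟩
    exact ⟨j, hj, by rw [smul_pi_apply, hf]⟩

lemma lastO_smul (g : Equiv.Perm (Fin n)) (f : Fin d → Fin n) (u : Fin n)
    (H : touched f d u) : lastO (g • f) d (g u) = lastO f d u := by
  apply le_antisymm
  · obtain ⟨hlt, hd, hval⟩ := lastO_spec ((touched_smul g f u).mpr H)
    exact lastO_ge _ hd hlt (Equiv.injective g (by rw [← smul_pi_apply g f ⟨_, hd⟩, hval]))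
  · obtain ⟨hlt, hd, hval⟩ := lastO_spec H
    exact lastO_ge _ hd hlt (by rw [smul_pi_apply, hval])

lemma keyP_smul (g : Equiv.Perm (Fin n)) (f : Fin d → Fin n) (u : Fin n)
    (H : touched f d u) : keyP (g • f) d (g u) = keyP f d u := by
  unfold keyP
  rw [if_pos ((touched_smul g f u).mpr H), if_pos H, lastO_smul g f u H]

lemma card_filter_keyDec (h0 : 0 < n) {f : Fin d → Fin n} (hf : KeyDec f) (v : Fin n) :
    (univ.filter fun u => keyP f d u < keyP f d v).card = n - 1 - (v : ℕ) := by
  have : (univ.filter fun u => keyP f d u < keyP f d v) = Finset.Ioi v := by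
    ext u
    simp only [Finset.mem_filter, Finset.mem_univ, true_and, Finset.mem_Ioi]
    exact ((hf v u).symm).trans Iff.rfl |>.symm |>.symm
  rw [this, Fin.card_Ioi]

lemma keyDec_smul_eq (h0 : 0 < n) {f : Fin d → Fin n} (g : Equiv.Perm (Fin n))
    (hf : KeyDec f) (hgf : KeyDec (g • f)) : g • f = f := by
  have main : ∀ v : Fin n, touched f d v → g v = v := by
    intro v hv
    have hkeyv : keyP (g • f) d (g v) = keyP f d v := keyP_smul g f v hv
    have hvn : n ≤ keyP f d v := keyP_touched_ge hv
    have hbij : (univ.filter fun u => keyP f d u < keyP f d v).card =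
        (univ.filter fun u => keyP (g • f) d u < keyP (g • f) d (g v)).card := by
      apply Finset.card_bij (fun u _ => g u)
      · intro u hu
        simp only [Finset.mem_filter, Finset.mem_univ, true_and] at hu ⊢
        by_cases htu : touched f d u
        · rw [keyP_smul g f u htu, hkeyv]; exact hu
        · have htgu : ¬ touched (g • f) d (g u) := fun hh => htu ((touched_smul g f u).mp hh)
          rw [keyP_untouched htgu, hkeyv]
          have := (g u).isLt
          omega
      · intro u₁ _ u₂ _ h
        exact Equiv.injective g h
      · intro u' hu'
        have hmem : g⁻¹ u' ∈ univ.filter (fun u => keyP f d u < keyP f d v) := by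
          simp only [Finset.mem_filter, Finset.mem_univ, true_and] at hu' ⊢
          by_cases htu : touched f d (g⁻¹ u')
          · rw [← hkeyv, ← keyP_smul g f _ htu, Equiv.Perm.apply_inv_self]
            exact hu'
          · have h1 : keyP f d (g⁻¹ u') = n - 1 - ((g⁻¹ u' : Fin n) : ℕ) := keyP_untouched htu
            have := (g⁻¹ u' : Fin n).isLt
            omega
        exact ⟨g⁻¹ u', hmem, Equiv.Perm.apply_inv_self g u'⟩
    rw [card_filter_keyDec h0 hf v, card_filter_keyDec h0 hgf (g v)] at hbij
    have h2 : (v : ℕ) < n := v.isLt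
    have h3 : ((g v : Fin n) : ℕ) < n := (g v).isLt
    exact (Fin.ext (show ((v : Fin n) : ℕ) = ((g v : Fin n) : ℕ) by omega)).symm
  funext i
  rw [smul_pi_apply]
  exact main (f i) ⟨i, i.isLt, rfl⟩

lemma keyP_inj (h0 : 0 < n) (f : Fin d → Fin n) :
    Function.Injective (keyP f d) := by
  intro u v h
  by_cases hu : touched f d u <;> by_cases hv : touched f d v
  · obtain ⟨hu1, hud, huval⟩ := lastO_spec hu
    obtain ⟨hv1, hvd, hvval⟩ := lastO_spec hv
    unfold keyP at h
    rw [if_pos hu, if_pos hv] at h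
    have : lastO f d u = lastO f d v := by omega
    rw [← huval, ← hvval]
    congr 1
    exact Fin.ext this
  · have := keyP_touched_ge hu
    rw [keyP_untouched hv] at h
    have := v.isLt
    omega
  · have := keyP_touched_ge hv
    rw [keyP_untouched hu] at h
    have := u.isLt
    omega
  · rw [keyP_untouched hu, keyP_untouched hv] at h
    have := u.isLt
    have := v.isLt
    exact Fin.ext (by omega)

lemma exists_keyDec_smul (h0 : 0 < n) (f : Fin d → Fin n) :
    ∃ g : Equiv.Perm (Fin n), KeyDec (g • f) := by
  classical
  set val : Fin n → ℕ := fun u => (n + d) - keyP f d u with hval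
  have hkb : ∀ u, keyP f d u < n + d := fun u => keyP_lt h0 f d u
  have hvi : Function.Injective val := by
    intro u v h
    apply keyP_inj h0 f
    have h1 := hkb u
    have h2 := hkb v
    simp only [hval] at h
    omega
  set σ := Tuple.sort val with hσ
  have hmono : Monotone (val ∘ σ) := Tuple.monotone_sort val
  have hsm : StrictMono (val ∘ σ) := hmono.strictMono_of_injective (hvi.comp σ.injective)
  have hanti : ∀ u v : Fin n, u < v → keyP f d (σ v) < keyP f d (σ u) := by
    intro u v huv
    have := hsm huv
    simp only [Function.comp_apply, hval] at this
    have h1 := hkb (σ u)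
    have h2 := hkb (σ v)
    omega
  refine ⟨σ⁻¹, ?_⟩
  have htt : ∀ u : Fin n, touched (σ⁻¹ • f) d u ↔ touched f d (σ u) := by
    intro u
    constructor
    · rintro ⟨j, hj, hf'⟩
      refine ⟨j, hj, ?_⟩
      rw [← hf', smul_pi_apply, Equiv.Perm.apply_inv_self]
    · rintro ⟨j, hj, hf'⟩
      exact ⟨j, hj, by rw [smul_pi_apply, hf', Equiv.Perm.inv_apply_self]⟩
  have hlast : ∀ u : Fin n, touched f d (σ u) → lastO (σ⁻¹ • f) d u = lastO f d (σ u) := by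
    intro u H
    apply le_antisymm
    · obtain ⟨hlt, hd2, hval2⟩ := lastO_spec ((htt u).mpr H)
      refine lastO_ge _ hd2 hlt ?_
      rw [← Equiv.Perm.apply_inv_self σ (f _), ← smul_pi_apply σ⁻¹ f ⟨_, hd2⟩, hval2]
    · obtain ⟨hlt, hd2, hval2⟩ := lastO_spec H
      exact lastO_ge _ hd2 hlt (by rw [smul_pi_apply, hval2, Equiv.Perm.inv_apply_self])
  have hkey : ∀ u : Fin n, touched f d (σ u) →
      keyP (σ⁻¹ • f) d u = keyP f d (σ u) := by
    intro u H
    unfold keyP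
    rw [if_pos ((htt u).mpr H), if_pos H, hlast u H]
  intro u v
  by_cases hu : touched f d (σ u) <;> by_cases hv : touched f d (σ v)
  · rw [hkey u hu, hkey v hv]
    constructor
    · exact fun h => hanti u v h
    · intro h
      rcases lt_trichotomy u v with h' | h' | h'
      · exact h'
      · subst h'; omega
      · exact absurd (hanti v u h') (by omega)
  · have h1 : n ≤ keyP (σ⁻¹ • f) d u := by rw [hkey u hu]; exact keyP_touched_ge hu
    have h2 : keyP (σ⁻¹ • f) d v = n - 1 - (v : ℕ) :=
      keyP_untouched (fun hh => hv ((htt v).mp hh))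
    refine iff_of_true ?_ (by have := v.isLt; omega)
    rcases lt_trichotomy u v with h' | h' | h'
    · exact h'
    · exact absurd (hu) (by subst h'; exact hv)
    · exfalso
      have := hanti v u h'
      have h3 := keyP_touched_ge hu
      have h4 : keyP f d (σ v) = n - 1 - ((σ v : Fin n) : ℕ) := keyP_untouched hv
      have := (σ v : Fin n).isLt
      omega
  · have h1 : n ≤ keyP (σ⁻¹ • f) d v := by rw [hkey v hv]; exact keyP_touched_ge hv
    have h2 : keyP (σ⁻¹ • f) d u = n - 1 - (u : ℕ) :=
      keyP_untouched (fun hh => hu ((htt u).mp hh))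
    refine iff_of_false ?_ (by have := u.isLt; omega)
    intro h'
    have := hanti u v h'
    have h3 := keyP_touched_ge hv
    have h4 : keyP f d (σ u) = n - 1 - ((σ u : Fin n) : ℕ) := keyP_untouched hu
    have := (σ u : Fin n).isLt
    omega
  · rw [keyP_untouched (fun hh => hu ((htt u).mp hh)),
      keyP_untouched (fun hh => hv ((htt v).mp hh)), Fin.lt_def]
    have := u.isLt
    have := v.isLt
    omega

noncomputable def keyDecOrbitEquiv (hn : 2 ≤ n) :
    {f : Fin d → Fin n // KeyDec f} ≃
      orbitRel.Quotient (Equiv.Perm (Fin n)) (Fin d → Fin n) := by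
  have h0 : 0 < n := by omega
  refine Equiv.ofBijective
    (fun f => Quotient.mk (orbitRel (Equiv.Perm (Fin n)) (Fin d → Fin n)) f.1) ⟨?_, ?_⟩
  · intro f f' h
    have hrel : orbitRel (Equiv.Perm (Fin n)) (Fin d → Fin n) f.1 f'.1 := Quotient.exact h
    obtain ⟨g, hg⟩ := MulAction.mem_orbit_iff.mp (orbitRel_apply.mp hrel)
    apply Subtype.ext
    rw [← hg]
    exact keyDec_smul_eq h0 g f'.2 (by rw [hg]; exact f.2)
  · intro q
    induction q using Quotient.inductionOn with
    | h f0 =>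
      obtain ⟨g, hg⟩ := exists_keyDec_smul h0 f0
      exact ⟨⟨g • f0, hg⟩, Quotient.sound ((orbitRel_apply).mpr (mem_orbit f0 g))⟩

end words4

/-- **Invariants of the permutation module count words in a Cayley graph of `S_n`.**
For `n ≥ 2` and `d ≥ 0`, the dimension of the space of `S_n`-invariant tensors in
`(ℂ^n)^{⊗d}` (permutation action) equals the number of words of length `d` over
`{e} ∪ C_n` which reduce to the identity permutation. -/
theorem dim_perm_invariants_eq_wordCount (n : ℕ) (hn : 2 ≤ n) (d : ℕ) :
    invariantDim (permRep n) d =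
      Nat.card {w : Fin d → {x // x ∈ insert (1 : Equiv.Perm (Fin n)) (Cn n)} //
        (List.ofFn fun i => ((w i : Equiv.Perm (Fin n)))).prod = 1} := by
  rw [invariantDim_eq_card_orbits]
  exact (Nat.card_congr ((wordEquiv hn).trans (keyDecOrbitEquiv hn))).symm
end

section
/- Let m = 2k+1 be odd with k ≥ 1 and let D_m = ⟨s, r | s² = r^m = srsr = e⟩. In ℝ[D_m] set y_i = r^{1−i}s + r^i for 1 ≤ i ≤ k (exponents taken modulo m). Then: (i) the 2k+2 elements e, rs, y_1, …, y_k, y_1·rs, …, y_k·rs are linearly independent and their ℝ-linear span Q is closed under the multiplication of ℝ[D_m]; (ii) the ℝ-linear map θ : Q → ClassFun_ℝ(D_m) determined by θ(e) = id, θ(rs) = ε, and θ(y_i) = θ(y_i·rs) = χ_i for 1 ≤ i ≤ k is multiplicative (θ(fg) = θ(f)·θ(g) pointwise for all f, g ∈ Q) and its image is the ℝ-linear span of the irreducible characters of D_m. -/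
open DihedralGroup

/-- The group-algebra element corresponding to `g ∈ D_m`. -/
noncomputable def sg {m : ℕ} (g : DihedralGroup m) : MonoidAlgebra ℝ (DihedralGroup m) :=
  MonoidAlgebra.single g 1

/-- `y_i = r^{1-i} s + r^i` in `ℝ[D_m]`; in Mathlib's presentation of the dihedral group
(`s = sr 0`, `r = r 1`) one has `r^{1-i} s = sr (i - 1)`. -/
noncomputable def yElt (m : ℕ) (i : ℕ) : MonoidAlgebra ℝ (DihedralGroup m) :=
  sg (sr ((i : ZMod m) - 1)) + sg (r (i : ZMod m))

/-- `rs = r · s = sr (-1)` in `ℝ[D_m]`. -/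
noncomputable def rsElt (m : ℕ) : MonoidAlgebra ℝ (DihedralGroup m) := sg (sr (-1))

/-- The trivial character `id` of `D_m`. -/
noncomputable def chiId (m : ℕ) : DihedralGroup m → ℝ := fun _ => 1

/-- The character `ε` of `D_m`: `ε(rᵃ) = 1`, `ε(rᵃs) = -1`. -/
noncomputable def chiEps (m : ℕ) : DihedralGroup m → ℝ
  | .r _ => 1
  | .sr _ => -1

/-- The character `γ` of `D_m` (`m` even): `γ(rᵃ) = (-1)ᵃ`, `γ(rᵃs) = (-1)ᵃ`. -/
noncomputable def chiGamma (m : ℕ) : DihedralGroup m → ℝ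
  | .r a => (-1 : ℝ) ^ a.val
  | .sr a => (-1 : ℝ) ^ a.val

/-- The character `γε` of `D_m` (`m` even): `γε(rᵃ) = (-1)ᵃ`, `γε(rᵃs) = (-1)^{a+1}`. -/
noncomputable def chiGammaEps (m : ℕ) : DihedralGroup m → ℝ
  | .r a => (-1 : ℝ) ^ a.val
  | .sr a => (-1 : ℝ) ^ (a.val + 1)

/-- The two-dimensional character `χ_j` of `D_m`: `χ_j(rᵃ) = 2cos(2πja/m)`,
`χ_j(rᵃs) = 0`. -/
noncomputable def chiJ (m : ℕ) (j : ℕ) : DihedralGroup m → ℝ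
  | .r a => 2 * Real.cos (2 * Real.pi * j * a.val / m)
  | .sr _ => 0

/-- The family `e, rs, y_1, …, y_k, y_1·rs, …, y_k·rs` in `ℝ[D_m]` for `m = 2k+1` odd. -/
noncomputable def famOdd (k : ℕ) :
    (Fin 2 ⊕ (Fin k ⊕ Fin k)) → MonoidAlgebra ℝ (DihedralGroup (2 * k + 1)) :=
  Sum.elim
    ![sg 1, rsElt (2 * k + 1)]
    (Sum.elim (fun i => yElt (2 * k + 1) (i.val + 1))
      (fun i => yElt (2 * k + 1) (i.val + 1) * rsElt (2 * k + 1)))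

namespace DOdd

noncomputable def Y (m : ℕ) (a : ZMod m) : MonoidAlgebra ℝ (DihedralGroup m) :=
  sg (sr (a - 1)) + sg (r a)

lemma yElt_eq (m i : ℕ) : yElt m i = Y m (i : ZMod m) := rfl

lemma sg_mul {m : ℕ} (g h : DihedralGroup m) : sg g * sg h = sg (g * h) := by
  simp [sg, MonoidAlgebra.single_mul_single]

lemma sg_one {m : ℕ} : sg (1 : DihedralGroup m) = 1 := rfl

lemma Y_mul_Y {m : ℕ} (a b : ZMod m) : Y m a * Y m b = Y m (a + b) + Y m (b - a) := by
  simp only [Y, add_mul, mul_add, sg_mul, sr_mul_sr, sr_mul_r, r_mul_sr, r_mul_r]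
  have h1 : b - 1 - (a - 1) = b - a := by ring
  have h2 : a - 1 + b = a + b - 1 := by ring
  have h3 : b - 1 - a = b - a - 1 := by ring
  rw [h1, h2, h3]
  abel

lemma Y_mul_rs {m : ℕ} (a : ZMod m) : Y m a * rsElt m = Y m (-a) := by
  simp only [Y, rsElt, add_mul, sg_mul, sr_mul_sr, r_mul_sr]
  have h1 : (-1 : ZMod m) - (a - 1) = -a := by ring
  have h2 : (-1 : ZMod m) - a = -a - 1 := by ring
  rw [h1, h2]
  abel

lemma rs_mul_Y {m : ℕ} (a : ZMod m) : rsElt m * Y m a = Y m a := by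
  simp only [Y, rsElt, mul_add, sg_mul, sr_mul_sr, sr_mul_r]
  have h1 : a - 1 - (-1) = a := by ring
  have h2 : (-1 : ZMod m) + a = a - 1 := by ring
  rw [h1, h2]
  abel

lemma rs_mul_rs {m : ℕ} : rsElt m * rsElt m = sg 1 := by
  simp only [rsElt, sg_mul, sr_mul_sr, sub_self, one_def]

end DOdd

namespace DOdd

noncomputable def Psi (m : ℕ) (a : ZMod m) : DihedralGroup m → ℝ := chiJ m a.val

variable {m : ℕ} [NeZero m]

lemma val_cast_self (a : ZMod m) : ((a.val : ℕ) : ZMod m) = a := by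
  simp [ZMod.natCast_val, ZMod.cast_id]

/-- key congruence lemma: the cosine only depends on the residue of `n` mod `m`. -/
lemma cos_int (b : ℕ) (n : ℤ) (a : ZMod m) (h : (n : ZMod m) = a) :
    Real.cos (2 * Real.pi * (a.val : ℝ) * b / m) = Real.cos (2 * Real.pi * (n : ℝ) * b / m) := by
  have hm : (m : ℝ) ≠ 0 := Nat.cast_ne_zero.mpr (NeZero.ne m)
  have hcast : (((a.val : ℤ) : ZMod m)) = (n : ZMod m) := by
    rw [h]; exact_mod_cast val_cast_self a
  have hmod : (a.val : ℤ) ≡ n [ZMOD (m : ℕ)] := (ZMod.intCast_eq_intCast_iff _ _ _).mp hcast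
  obtain ⟨t, ht⟩ := hmod.dvd
  have hreal : (a.val : ℝ) = (n : ℝ) + (m : ℝ) * (-t : ℤ) := by
    have : (a.val : ℤ) = n + (m : ℤ) * (-t) := by linarith
    exact_mod_cast congrArg (Int.cast : ℤ → ℝ) this
  have key : 2 * Real.pi * (a.val : ℝ) * b / m
      = 2 * Real.pi * (n : ℝ) * b / m + ((-t * b : ℤ) : ℝ) * (2 * Real.pi) := by
    rw [hreal]
    have h2 : ((-t * b : ℤ) : ℝ) = ((-t : ℤ) : ℝ) * (b : ℝ) := by push_cast; ring
    rw [h2]; field_simp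
  rw [key, Real.cos_add_int_mul_two_pi]

lemma Psi_neg (a : ZMod m) : Psi m (-a) = Psi m a := by
  funext g
  cases g with
  | sr c => rfl
  | r c =>
    show 2 * Real.cos (2 * Real.pi * ((-a).val : ℝ) * c.val / m)
       = 2 * Real.cos (2 * Real.pi * ((a).val : ℝ) * c.val / m)
    rw [cos_int c.val (-(a.val : ℤ)) (-a) (by push_cast; rw [val_cast_self]),
        cos_int c.val ((a.val : ℤ)) a (by push_cast; rw [val_cast_self])]
    rw [show 2 * Real.pi * ((-(a.val:ℤ) : ℤ) : ℝ) * c.val / m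
        = -(2 * Real.pi * (((a.val:ℤ) : ℤ) : ℝ) * c.val / m) by push_cast; ring]
    rw [Real.cos_neg]

lemma Psi_mul (a b : ZMod m) : Psi m a * Psi m b = Psi m (a + b) + Psi m (b - a) := by
  funext g
  cases g with
  | sr c => show (0:ℝ) * 0 = 0 + 0; ring
  | r c =>
    show (2 * Real.cos (2 * Real.pi * (a.val : ℝ) * c.val / m)) * (2 * Real.cos (2 * Real.pi * (b.val : ℝ) * c.val / m))
       = 2 * Real.cos (2 * Real.pi * ((a+b).val : ℝ) * c.val / m) + 2 * Real.cos (2 * Real.pi * ((b-a).val : ℝ) * c.val / m)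
    rw [cos_int c.val ((a.val : ℤ) + b.val) (a+b) (by push_cast; rw [val_cast_self, val_cast_self]),
        cos_int c.val ((b.val : ℤ) - a.val) (b-a) (by push_cast; rw [val_cast_self, val_cast_self])]
    have e1 : 2 * Real.pi * (((a.val : ℤ) + b.val : ℤ) : ℝ) * c.val / m
        = 2 * Real.pi * (a.val:ℝ) * c.val / m + 2 * Real.pi * (b.val:ℝ) * c.val / m := by push_cast; ring
    have e2 : 2 * Real.pi * (((b.val : ℤ) - a.val : ℤ) : ℝ) * c.val / m
        = 2 * Real.pi * (b.val:ℝ) * c.val / m - 2 * Real.pi * (a.val:ℝ) * c.val / m := by push_cast; ring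
    rw [e1, e2, Real.cos_add, Real.cos_sub]
    ring

lemma chiEps_mul_chiEps : chiEps m * chiEps m = chiId m := by
  funext g; cases g <;> simp [chiEps, chiId]

lemma chiEps_mul_Psi (a : ZMod m) : chiEps m * Psi m a = Psi m a := by
  funext g; cases g <;> simp [chiEps, Psi, chiJ]

lemma Psi_mul_chiEps (a : ZMod m) : Psi m a * chiEps m = Psi m a := by
  funext g; cases g <;> simp [chiEps, Psi, chiJ]

lemma chiId_mul (f : DihedralGroup m → ℝ) : chiId m * f = f := by
  funext g; simp [chiId]

lemma mul_chiId (f : DihedralGroup m → ℝ) : f * chiId m = f := by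
  funext g; simp [chiId]

lemma chiEps_add_chiId : chiEps m + chiId m = Psi m 0 := by
  funext g; cases g with
  | r c => show (1:ℝ) + 1 = 2 * Real.cos (2 * Real.pi * ((0 : ZMod m).val : ℝ) * c.val / m)
           simp [ZMod.val_zero]; norm_num
  | sr c => show (-1:ℝ) + 1 = 0; ring

end DOdd

namespace DOdd
open DihedralGroup

noncomputable def tFun (m : ℕ) : DihedralGroup m → (DihedralGroup m → ℝ)
  | .r a => if a = 0 then chiId m else chiJ m a.val
  | .sr a => if a = -1 then chiEps m else 0

noncomputable def T (m : ℕ) : MonoidAlgebra ℝ (DihedralGroup m) →ₗ[ℝ] (DihedralGroup m → ℝ) :=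
  (Finsupp.linearCombination ℝ (tFun m)).comp (MonoidAlgebra.coeffLinearEquiv ℝ).toLinearMap

variable {m : ℕ} [NeZero m]

lemma T_sg (g : DihedralGroup m) : T m (sg g) = tFun m g := by
  show Finsupp.linearCombination ℝ (tFun m) (Finsupp.single g 1) = tFun m g
  rw [Finsupp.linearCombination_single, one_smul]

lemma T_rs : T m (rsElt m) = chiEps m := by
  rw [rsElt, T_sg]; simp [tFun]

lemma T_one : T m (sg 1) = chiId m := by
  rw [one_def, T_sg]; simp [tFun]

lemma T_Y (a : ZMod m) : T m (Y m a) = Psi m a := by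
  rw [Y, map_add, T_sg, T_sg]
  by_cases h : a = 0
  · subst h
    have h1 : (0 : ZMod m) - 1 = -1 := by ring
    rw [h1]
    simp only [tFun, if_pos rfl]
    exact chiEps_add_chiId
  · have h1 : a - 1 ≠ -1 := by
      intro hc; apply h; have := congrArg (· + 1) hc; simpa using this
    simp only [tFun, if_neg h1, if_neg h]
    rw [zero_add]; rfl

end DOdd

namespace DOdd
open DihedralGroup

def Sset (m : ℕ) : Set (MonoidAlgebra ℝ (DihedralGroup m)) :=
  {sg 1, rsElt m} ∪ Set.range (Y m)

variable {m : ℕ} [NeZero m]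

lemma mul_mem_S : ∀ x ∈ Sset m, ∀ y ∈ Sset m, x * y ∈ Submodule.span ℝ (Sset m) := by
  rintro x hx y hy
  rcases hx with (rfl | rfl) | ⟨a, rfl⟩
  · rw [sg_one, one_mul]; exact Submodule.subset_span hy
  · rcases hy with (rfl | rfl) | ⟨b, rfl⟩
    · rw [sg_one, mul_one]; exact Submodule.subset_span (Or.inl (Or.inr rfl))
    · rw [rs_mul_rs]; exact Submodule.subset_span (Or.inl (Or.inl rfl))
    · rw [rs_mul_Y]; exact Submodule.subset_span (Or.inr ⟨b, rfl⟩)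
  · rcases hy with (rfl | rfl) | ⟨b, rfl⟩
    · rw [sg_one, mul_one]; exact Submodule.subset_span (Or.inr ⟨a, rfl⟩)
    · rw [Y_mul_rs]; exact Submodule.subset_span (Or.inr ⟨-a, rfl⟩)
    · rw [Y_mul_Y]
      exact add_mem (Submodule.subset_span (Or.inr ⟨a + b, rfl⟩))
        (Submodule.subset_span (Or.inr ⟨b - a, rfl⟩))

lemma span_mul_mem {f g : MonoidAlgebra ℝ (DihedralGroup m)}
    (hf : f ∈ Submodule.span ℝ (Sset m)) (hg : g ∈ Submodule.span ℝ (Sset m)) :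
    f * g ∈ Submodule.span ℝ (Sset m) := by
  induction hf, hg using Submodule.span_induction₂ with
  | mem_mem x y hx hy => exact mul_mem_S x hx y hy
  | zero_left y hy => rw [zero_mul]; exact zero_mem _
  | zero_right x hx => rw [mul_zero]; exact zero_mem _
  | add_left x y z hx hy hz h1 h2 => rw [add_mul]; exact add_mem h1 h2
  | add_right x y z hx hy hz h1 h2 => rw [mul_add]; exact add_mem h1 h2
  | smul_left r x y hx hy h => rw [smul_mul_assoc]; exact Submodule.smul_mem _ _ h
  | smul_right r x y hx hy h => rw [mul_smul_comm]; exact Submodule.smul_mem _ _ h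

lemma T_mul {f g : MonoidAlgebra ℝ (DihedralGroup m)}
    (hf : f ∈ Submodule.span ℝ (Sset m)) (hg : g ∈ Submodule.span ℝ (Sset m)) :
    T m (f * g) = T m f * T m g := by
  induction hf, hg using Submodule.span_induction₂ with
  | mem_mem x y hx hy =>
    rcases hx with (rfl | rfl) | ⟨a, rfl⟩
    · rw [T_one, chiId_mul, sg_one, one_mul]
    · rcases hy with (rfl | rfl) | ⟨b, rfl⟩
      · rw [T_one, mul_chiId, sg_one, mul_one]
      · rw [rs_mul_rs, T_one, T_rs, chiEps_mul_chiEps]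
      · rw [rs_mul_Y, T_rs, T_Y, chiEps_mul_Psi]
    · rcases hy with (rfl | rfl) | ⟨b, rfl⟩
      · rw [T_one, mul_chiId, sg_one, mul_one]
      · rw [Y_mul_rs, T_Y, T_rs, T_Y, Psi_mul_chiEps, Psi_neg]
      · rw [Y_mul_Y, map_add, T_Y, T_Y, T_Y, T_Y, Psi_mul]
  | zero_left y hy => rw [zero_mul, map_zero, zero_mul]
  | zero_right x hx => rw [mul_zero, map_zero, mul_zero]
  | add_left x y z hx hy hz h1 h2 => rw [add_mul, map_add, map_add, add_mul, h1, h2]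
  | add_right x y z hx hy hz h1 h2 => rw [mul_add, map_add, map_add, mul_add, h1, h2]
  | smul_left r x y hx hy h => rw [smul_mul_assoc, map_smul, map_smul, smul_mul_assoc, h]
  | smul_right r x y hx hy h => rw [mul_smul_comm, map_smul, map_smul, mul_smul_comm, h]

end DOdd

namespace DOdd
open DihedralGroup

variable {k : ℕ}

lemma famOdd_inl0 : famOdd k (Sum.inl 0) = sg 1 := rfl
lemma famOdd_inl1 : famOdd k (Sum.inl 1) = rsElt (2*k+1) := rfl
lemma famOdd_inr_inl (i : Fin k) :
    famOdd k (Sum.inr (Sum.inl i)) = Y (2*k+1) ((i.val + 1 : ℕ) : ZMod (2*k+1)) := rfl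
lemma famOdd_inr_inr (i : Fin k) :
    famOdd k (Sum.inr (Sum.inr i)) = Y (2*k+1) (-((i.val + 1 : ℕ) : ZMod (2*k+1))) := by
  show yElt (2*k+1) (i.val + 1) * rsElt (2*k+1) = _
  rw [yElt_eq, Y_mul_rs]

lemma zsum {x y : ℕ} (h : x + y = 2*k+1) :
    ((x : ℕ) : ZMod (2*k+1)) + ((y : ℕ) : ZMod (2*k+1)) = 0 := by
  rw [← Nat.cast_add, h, ZMod.natCast_self]

lemma Y_zero_eq : Y (2*k+1) 0 = rsElt (2*k+1) + sg 1 := by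
  rw [Y, rsElt, zero_sub, one_def]

lemma Y_mem (a : ZMod (2*k+1)) :
    Y (2*k+1) a ∈ Submodule.span ℝ (Set.range (famOdd k)) := by
  by_cases h0 : a = 0
  · subst h0
    rw [Y_zero_eq]
    exact add_mem (Submodule.subset_span ⟨Sum.inl 1, famOdd_inl1⟩)
      (Submodule.subset_span ⟨Sum.inl 0, famOdd_inl0⟩)
  · have hvlt : a.val < 2*k+1 := ZMod.val_lt a
    have hvne : a.val ≠ 0 := fun hc => h0 (by rw [← val_cast_self a, hc, Nat.cast_zero])
    by_cases hle : a.val ≤ k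
    · refine Submodule.subset_span ⟨Sum.inr (Sum.inl ⟨a.val - 1, by omega⟩), ?_⟩
      rw [famOdd_inr_inl]
      congr 1
      rw [show a.val - 1 + 1 = a.val by omega]
      exact val_cast_self a
    · refine Submodule.subset_span ⟨Sum.inr (Sum.inr ⟨2*k - a.val, by omega⟩), ?_⟩
      rw [famOdd_inr_inr]
      have h1 : ((2*k - a.val + 1 : ℕ) : ZMod (2*k+1)) + ((a.val : ℕ) : ZMod (2*k+1)) = 0 :=
        zsum (by omega)
      rw [val_cast_self] at h1
      rw [neg_eq_of_add_eq_zero_right h1]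

lemma span_S_eq :
    Submodule.span ℝ (Sset (2*k+1)) = Submodule.span ℝ (Set.range (famOdd k)) := by
  apply le_antisymm
  · rw [Submodule.span_le]
    rintro x ((rfl | rfl) | ⟨a, rfl⟩)
    · exact Submodule.subset_span ⟨Sum.inl 0, famOdd_inl0⟩
    · exact Submodule.subset_span ⟨Sum.inl 1, famOdd_inl1⟩
    · exact Y_mem a
  · rw [Submodule.span_le]
    rintro x ⟨j, rfl⟩
    rcases j with j2 | jj | jj
    · fin_cases j2
      · exact Submodule.subset_span (Or.inl (Or.inl rfl))
      · exact Submodule.subset_span (Or.inl (Or.inr rfl))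
    · rw [famOdd_inr_inl]; exact Submodule.subset_span (Or.inr ⟨_, rfl⟩)
    · rw [famOdd_inr_inr]; exact Submodule.subset_span (Or.inr ⟨_, rfl⟩)

end DOdd

namespace DOdd
open DihedralGroup

variable {k : ℕ}

noncomputable def wOdd (k : ℕ) : (Fin 2 ⊕ (Fin k ⊕ Fin k)) → DihedralGroup (2*k+1) :=
  Sum.elim ![r ((0:ℕ) : ZMod (2*k+1)), sr ((2*k : ℕ) : ZMod (2*k+1))]
    (Sum.elim (fun i => r ((i.val + 1 : ℕ) : ZMod (2*k+1)))
      (fun i => r ((2*k - i.val : ℕ) : ZMod (2*k+1))))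

lemma w0 : wOdd k (Sum.inl 0) = r ((0:ℕ) : ZMod (2*k+1)) := rfl
lemma w1 : wOdd k (Sum.inl 1) = sr ((2*k : ℕ) : ZMod (2*k+1)) := rfl
lemma w2 (i : Fin k) : wOdd k (Sum.inr (Sum.inl i)) = r ((i.val + 1 : ℕ) : ZMod (2*k+1)) := rfl
lemma w3 (i : Fin k) : wOdd k (Sum.inr (Sum.inr i)) = r ((2*k - i.val : ℕ) : ZMod (2*k+1)) := rfl

lemma neg_one_eq : (-1 : ZMod (2*k+1)) = ((2*k : ℕ) : ZMod (2*k+1)) := by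
  have h := zsum (x := 2*k) (y := 1) (by omega) (k := k)
  have := neg_eq_of_add_eq_zero_left h
  rw [Nat.cast_one] at this
  exact this

lemma csub (j : ℕ) : ((j + 1 : ℕ) : ZMod (2*k+1)) - 1 = ((j : ℕ) : ZMod (2*k+1)) := by
  push_cast; ring

lemma cneg {j : ℕ} (hj : j < k) :
    -((j + 1 : ℕ) : ZMod (2*k+1)) = ((2*k - j : ℕ) : ZMod (2*k+1)) :=
  neg_eq_of_add_eq_zero_right (zsum (by omega))

lemma csub2 {j : ℕ} (hj : j < k) :
    ((2*k - j : ℕ) : ZMod (2*k+1)) - 1 = ((2*k - 1 - j : ℕ) : ZMod (2*k+1)) := by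
  rw [show 2*k - j = (2*k - 1 - j) + 1 by omega, csub]

lemma c0 : famOdd k (Sum.inl 0) = sg (r ((0:ℕ) : ZMod (2*k+1))) := by
  rw [famOdd_inl0, one_def]; norm_num
lemma c1 : famOdd k (Sum.inl 1) = sg (sr ((2*k : ℕ) : ZMod (2*k+1))) := by
  rw [famOdd_inl1, rsElt, neg_one_eq]
lemma c2 (j : Fin k) : famOdd k (Sum.inr (Sum.inl j)) =
    sg (sr ((j.val : ℕ) : ZMod (2*k+1))) + sg (r ((j.val + 1 : ℕ) : ZMod (2*k+1))) := by
  rw [famOdd_inr_inl, Y, csub]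
lemma c3 (j : Fin k) : famOdd k (Sum.inr (Sum.inr j)) =
    sg (sr ((2*k - 1 - j.val : ℕ) : ZMod (2*k+1))) + sg (r ((2*k - j.val : ℕ) : ZMod (2*k+1))) := by
  rw [famOdd_inr_inr, Y, cneg j.isLt, csub2 j.isLt]

lemma sg_apply {m : ℕ} (g h : DihedralGroup m) :
    (sg g : MonoidAlgebra ℝ (DihedralGroup m)).coeff h = if g = h then 1 else 0 :=
  Finsupp.single_apply

lemma cast_inj_lt {m : ℕ} [NeZero m] {a b : ℕ} (ha : a < m) (hb : b < m) :
    ((a : ZMod m) = (b : ZMod m)) ↔ a = b := by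
  constructor
  · intro h
    have := congrArg ZMod.val h
    rwa [ZMod.val_cast_of_lt ha, ZMod.val_cast_of_lt hb] at this
  · rintro rfl; rfl

lemma sgr_r {a b : ℕ} (ha : a < 2*k+1) (hb : b < 2*k+1) :
    (sg (r ((a:ℕ) : ZMod (2*k+1)))).coeff (r ((b:ℕ) : ZMod (2*k+1))) = if a = b then (1:ℝ) else 0 := by
  rw [sg_apply]
  by_cases h : a = b
  · subst h; simp
  · rw [if_neg h, if_neg (by simp [cast_inj_lt ha hb, h])]

lemma sgsr_sr {a b : ℕ} (ha : a < 2*k+1) (hb : b < 2*k+1) :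
    (sg (sr ((a:ℕ) : ZMod (2*k+1)))).coeff (sr ((b:ℕ) : ZMod (2*k+1))) = if a = b then (1:ℝ) else 0 := by
  rw [sg_apply]
  by_cases h : a = b
  · subst h; simp
  · rw [if_neg h, if_neg (by simp [cast_inj_lt ha hb, h])]

lemma sgr_sr {m : ℕ} (x y : ZMod m) : (sg (r x)).coeff (sr y) = (0:ℝ) := by
  rw [sg_apply, if_neg (by simp)]

lemma sgsr_r {m : ℕ} (x y : ZMod m) : (sg (sr x)).coeff (r y) = (0:ℝ) := by
  rw [sg_apply, if_neg (by simp)]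

lemma famOdd_apply (j i : Fin 2 ⊕ (Fin k ⊕ Fin k)) :
    (famOdd k j).coeff (wOdd k i) = if j = i then (1:ℝ) else 0 := by
  have hk' : ∀ jj : Fin k, jj.val < k := Fin.isLt
  rcases j with j2 | jj | jj <;> rcases i with i2 | ii | ii
  · obtain rfl | rfl : j2 = 0 ∨ j2 = 1 := by omega
    · obtain rfl | rfl : i2 = 0 ∨ i2 = 1 := by omega
      · rw [c0, w0, sgr_r (by omega) (by omega)]; simp
      · rw [c0, w1, sgr_sr]; simp
    · obtain rfl | rfl : i2 = 0 ∨ i2 = 1 := by omega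
      · rw [c1, w0, sgsr_r]; simp
      · rw [c1, w1, sgsr_sr (by omega) (by omega)]; simp
  · obtain rfl | rfl : j2 = 0 ∨ j2 = 1 := by omega
    · rw [c0, w2, sgr_r (by omega) (by omega), if_neg (by omega), if_neg (by simp)]
    · rw [c1, w2, sgsr_r, if_neg (by simp)]
  · obtain rfl | rfl : j2 = 0 ∨ j2 = 1 := by omega
    · have := ii.isLt
      rw [c0, w3, sgr_r (by omega) (by omega), if_neg (by omega), if_neg (by simp)]
    · rw [c1, w3, sgsr_r, if_neg (by simp)]
  · obtain rfl | rfl : i2 = 0 ∨ i2 = 1 := by omega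
    · rw [c2, w0, MonoidAlgebra.coeff_add, Finsupp.add_apply, sgsr_r, sgr_r (by omega) (by omega),
        if_neg (by omega), if_neg (by simp)]
      ring
    · have := jj.isLt
      rw [c2, w1, MonoidAlgebra.coeff_add, Finsupp.add_apply, sgsr_sr (by omega) (by omega), sgr_sr,
        if_neg (by omega), if_neg (by simp)]
      ring
  · have h1 := jj.isLt; have h2 := ii.isLt
    rw [c2, w2, MonoidAlgebra.coeff_add, Finsupp.add_apply, sgsr_r, sgr_r (by omega) (by omega)]
    by_cases h : jj = ii
    · subst h; simp
    · have : jj.val ≠ ii.val := fun hc => h (Fin.ext hc)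
      rw [if_neg (by omega), if_neg (by simp [h])]
      ring
  · have h1 := jj.isLt; have h2 := ii.isLt
    rw [c2, w3, MonoidAlgebra.coeff_add, Finsupp.add_apply, sgsr_r, sgr_r (by omega) (by omega),
      if_neg (by omega), if_neg (by simp)]
    ring
  · obtain rfl | rfl : i2 = 0 ∨ i2 = 1 := by omega
    · have := jj.isLt
      rw [c3, w0, MonoidAlgebra.coeff_add, Finsupp.add_apply, sgsr_r, sgr_r (by omega) (by omega),
        if_neg (by omega), if_neg (by simp)]
      ring
    · have := jj.isLt
      rw [c3, w1, MonoidAlgebra.coeff_add, Finsupp.add_apply, sgsr_sr (by omega) (by omega), sgr_sr,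
        if_neg (by omega), if_neg (by simp)]
      ring
  · have h1 := jj.isLt; have h2 := ii.isLt
    rw [c3, w2, MonoidAlgebra.coeff_add, Finsupp.add_apply, sgsr_r, sgr_r (by omega) (by omega),
      if_neg (by omega), if_neg (by simp)]
    ring
  · have h1 := jj.isLt; have h2 := ii.isLt
    rw [c3, w3, MonoidAlgebra.coeff_add, Finsupp.add_apply, sgsr_r, sgr_r (by omega) (by omega)]
    by_cases h : jj = ii
    · subst h; simp
    · have : jj.val ≠ ii.val := fun hc => h (Fin.ext hc)
      rw [if_neg (by omega), if_neg (by simp [h])]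
      ring

lemma famOdd_li (k : ℕ) : LinearIndependent ℝ (famOdd k) := by
  rw [Fintype.linearIndependent_iff]
  intro g hg i
  let F : (Fin 2 ⊕ (Fin k ⊕ Fin k)) → (DihedralGroup (2*k+1) →₀ ℝ) := fun j => (famOdd k j).coeff
  have hg' : (∑ i : Fin 2 ⊕ (Fin k ⊕ Fin k), g i • F i) = (0 : DihedralGroup (2*k+1) →₀ ℝ) := by
    rw [← MonoidAlgebra.coeff_zero, ← hg, MonoidAlgebra.coeff_sum]; rfl
  have h := DFunLike.congr_fun hg' (wOdd k i)
  rw [Finsupp.finset_sum_apply] at h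
  simp only [F, Finsupp.smul_apply, famOdd_apply, smul_eq_mul, mul_ite, mul_one, mul_zero,
    Finsupp.coe_zero, Pi.zero_apply, Finset.sum_ite_eq', Finset.mem_univ, if_pos] at h
  exact h

end DOdd

namespace DOdd
open DihedralGroup

variable {k : ℕ}

lemma T_fam0 : T (2*k+1) (famOdd k (Sum.inl 0)) = chiId (2*k+1) := by
  rw [famOdd_inl0, T_one]
lemma T_fam1 : T (2*k+1) (famOdd k (Sum.inl 1)) = chiEps (2*k+1) := by
  rw [famOdd_inl1, T_rs]
lemma T_fam2 (i : Fin k) :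
    T (2*k+1) (famOdd k (Sum.inr (Sum.inl i))) = chiJ (2*k+1) (i.val + 1) := by
  have := i.isLt
  rw [famOdd_inr_inl, T_Y]
  unfold Psi
  rw [ZMod.val_cast_of_lt (by omega)]
lemma T_fam3 (i : Fin k) :
    T (2*k+1) (famOdd k (Sum.inr (Sum.inr i))) = chiJ (2*k+1) (i.val + 1) := by
  have := i.isLt
  rw [famOdd_inr_inr, T_Y, Psi_neg]
  unfold Psi
  rw [ZMod.val_cast_of_lt (by omega)]

end DOdd

open DOdd

/-- **The subalgebra `Q` of `ℝ[D_m]` and the morphism onto the character algebra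
(`m = 2k+1` odd).**  (i) The `2k+2` elements `e, rs, y_i, y_i·rs` (`1 ≤ i ≤ k`) are
linearly independent and their span `Q` is closed under multiplication.  (ii) Any linear
map `θ : Q → (D_m → ℝ)` with `θ(e) = id`, `θ(rs) = ε` and `θ(y_i) = θ(y_i·rs) = χ_i` is
multiplicative on `Q`, and its image is the `ℝ`-span of the irreducible characters. -/
theorem dihedral_odd_subalgebra_and_character_morphism (k : ℕ) (hk : 1 ≤ k) :
    LinearIndependent ℝ (famOdd k) ∧
    (∀ f g : MonoidAlgebra ℝ (DihedralGroup (2 * k + 1)),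
      f ∈ Submodule.span ℝ (Set.range (famOdd k)) →
      g ∈ Submodule.span ℝ (Set.range (famOdd k)) →
      f * g ∈ Submodule.span ℝ (Set.range (famOdd k))) ∧
    (∀ θ : (Submodule.span ℝ (Set.range (famOdd k))) →ₗ[ℝ] (DihedralGroup (2 * k + 1) → ℝ),
      θ ⟨famOdd k (Sum.inl 0), Submodule.subset_span (Set.mem_range_self _)⟩
          = chiId (2 * k + 1) →
      θ ⟨famOdd k (Sum.inl 1), Submodule.subset_span (Set.mem_range_self _)⟩
          = chiEps (2 * k + 1) →
      (∀ i : Fin k,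
        θ ⟨famOdd k (Sum.inr (Sum.inl i)), Submodule.subset_span (Set.mem_range_self _)⟩
          = chiJ (2 * k + 1) (i.val + 1)) →
      (∀ i : Fin k,
        θ ⟨famOdd k (Sum.inr (Sum.inr i)), Submodule.subset_span (Set.mem_range_self _)⟩
          = chiJ (2 * k + 1) (i.val + 1)) →
      ((∀ (f g : MonoidAlgebra ℝ (DihedralGroup (2 * k + 1)))
          (hf : f ∈ Submodule.span ℝ (Set.range (famOdd k)))
          (hg : g ∈ Submodule.span ℝ (Set.range (famOdd k)))
          (hfg : f * g ∈ Submodule.span ℝ (Set.range (famOdd k))),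
          θ ⟨f * g, hfg⟩ = θ ⟨f, hf⟩ * θ ⟨g, hg⟩) ∧
        LinearMap.range θ = Submodule.span ℝ
          ({chiId (2 * k + 1), chiEps (2 * k + 1)} ∪
            Set.range fun j : Fin k => chiJ (2 * k + 1) (j.val + 1)))) := by
  refine ⟨famOdd_li k, ?_, ?_⟩
  · intro f g hf hg
    rw [← span_S_eq] at hf hg ⊢
    exact span_mul_mem hf hg
  · intro θ h0 h1 h2 h3
    have hθ : θ = (T (2*k+1)).comp
        (Submodule.span ℝ (Set.range (famOdd k))).subtype := by
      apply LinearMap.ext_on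
        (Submodule.span_span_coe_preimage (s := Set.range (famOdd k)) (R := ℝ))
      rintro x hx
      obtain ⟨j, hj⟩ := hx
      have hx2 : x = ⟨famOdd k j, Submodule.subset_span (Set.mem_range_self j)⟩ :=
        Subtype.ext hj.symm
      subst hx2
      simp only [LinearMap.comp_apply, Submodule.coe_subtype]
      rcases j with j2 | jj | jj
      · obtain rfl | rfl : j2 = 0 ∨ j2 = 1 := by omega
        · exact h0.trans T_fam0.symm
        · exact h1.trans T_fam1.symm
      · exact (h2 jj).trans (T_fam2 jj).symm
      · exact (h3 jj).trans (T_fam3 jj).symm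
    constructor
    · intro f g hf hg hfg
      rw [hθ]
      simp only [LinearMap.comp_apply, Submodule.coe_subtype]
      rw [← span_S_eq] at hf hg
      exact T_mul hf hg
    · rw [LinearMap.range_eq_map,
        ← Submodule.span_span_coe_preimage (s := Set.range (famOdd k)) (R := ℝ),
        Submodule.map_span]
      apply le_antisymm
      · rw [Submodule.span_le]
        rintro y ⟨x, hx, rfl⟩
        obtain ⟨j, hj⟩ := hx
        have hx2 : x = ⟨famOdd k j, Submodule.subset_span (Set.mem_range_self j)⟩ :=
          Subtype.ext hj.symm
        subst hx2
        rcases j with j2 | jj | jj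
        · obtain rfl | rfl : j2 = 0 ∨ j2 = 1 := by omega
          · rw [h0]; exact Submodule.subset_span (Or.inl (Or.inl rfl))
          · rw [h1]; exact Submodule.subset_span (Or.inl (Or.inr rfl))
        · rw [h2 jj]; exact Submodule.subset_span (Or.inr ⟨jj, rfl⟩)
        · rw [h3 jj]; exact Submodule.subset_span (Or.inr ⟨jj, rfl⟩)
      · rw [Submodule.span_le]
        rintro y ((rfl | rfl) | ⟨i, rfl⟩)
        · exact Submodule.subset_span
            ⟨_, ⟨Sum.inl 0, rfl⟩, h0⟩
        · exact Submodule.subset_span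
            ⟨_, ⟨Sum.inl 1, rfl⟩, h1⟩
        · exact Submodule.subset_span
            ⟨_, ⟨Sum.inr (Sum.inl i), rfl⟩, h2 i⟩
end

section
/- Let m ≥ 3. For d ≥ 0 let a_d be the number of words of length d over {r, s} in D_m that reduce to the identity e, and for d ≥ 1 let b_d be the number of words of length d over {r, s} that reduce to e and do not cross the identity, with b_0 = 0. Then in ℚ⟦q⟧ one has (Σ_{d≥0} a_d q^d)·(1 − Σ_{d≥1} b_d q^d) = 1. (This identity expresses that b_d is the number of free generators of degree d of the free algebra of invariants T(V¹)^{D_m}, where V¹ is the geometric module.) -/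
section FirstReturn

variable {G : Type*} [Group G] [DecidableEq G] {α : Type*} [Fintype α] (c : α → G)

def wprod (l : List α) : G := (l.map c).prod

def Aset (d : ℕ) := {l : List α // l.length = d ∧ wprod c l = 1}

def Bset (d : ℕ) := {l : List α // l.length = d ∧ wprod c l = 1 ∧
    ∀ j, 0 < j → j < d → wprod c (l.take j) ≠ 1}

def ofFnEquiv (d : ℕ) (Q : List α → Prop) :
    {w : Fin d → α // Q (List.ofFn w)} ≃ {l : List α // l.length = d ∧ Q l} where
  toFun w := ⟨List.ofFn w.1, List.length_ofFn, w.2⟩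
  invFun l := ⟨fun i => l.1.get (Fin.cast l.2.1.symm i), by
    have : (List.ofFn fun i => l.1.get (Fin.cast l.2.1.symm i)) = l.1 := by
      obtain ⟨l, hl, hq⟩ := l
      subst hl
      simpa using List.ofFn_getElem l
    rw [this]; exact l.2.2⟩
  left_inv w := by
    ext i
    simp [List.get_ofFn]
  right_inv l := by
    ext1
    obtain ⟨l, hl, hq⟩ := l
    subst hl
    simpa using List.ofFn_getElem l

instance (d : ℕ) (Q : List α → Prop) : Finite {l : List α // l.length = d ∧ Q l} :=
  Finite.of_equiv _ (ofFnEquiv d Q)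

instance (d : ℕ) : Finite (Aset c d) := by unfold Aset; infer_instance
instance (d : ℕ) : Finite (Bset c d) := by unfold Bset; infer_instance

omit [DecidableEq G] [Fintype α] in
lemma wprod_append (u v : List α) : wprod c (u ++ v) = wprod c u * wprod c v := by
  simp [wprod]

omit [DecidableEq G] [Fintype α] in
lemma take_full {n : ℕ} (l : Aset c n) : l.1.take n = l.1 :=
  List.take_of_length_le (le_of_eq l.2.1)

omit [DecidableEq G] [Fintype α] in
lemma exists_ret {n : ℕ} (hn : 0 < n) (l : Aset c n) :
    ∃ t, 0 < t ∧ wprod c (l.1.take t) = 1 :=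
  ⟨n, hn, by rw [take_full]; exact l.2.2⟩

omit [Fintype α] in
lemma ret_le {n : ℕ} (hn : 0 < n) (l : Aset c n) :
    Nat.find (exists_ret c hn l) ≤ n :=
  Nat.find_le ⟨hn, by rw [take_full]; exact l.2.2⟩

omit [Fintype α] in
lemma ret_pos {n : ℕ} (hn : 0 < n) (l : Aset c n) :
    0 < Nat.find (exists_ret c hn l) :=
  (Nat.find_spec (exists_ret c hn l)).1

omit [Fintype α] in
lemma ret_prod {n : ℕ} (hn : 0 < n) (l : Aset c n) :
    wprod c (l.1.take (Nat.find (exists_ret c hn l))) = 1 :=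
  (Nat.find_spec (exists_ret c hn l)).2

omit [Fintype α] in
lemma drop_prod {n : ℕ} (hn : 0 < n) (l : Aset c n) :
    wprod c (l.1.drop (Nat.find (exists_ret c hn l))) = 1 := by
  have h2 : wprod c (l.1.take (Nat.find (exists_ret c hn l))) *
      wprod c (l.1.drop (Nat.find (exists_ret c hn l))) = wprod c l.1 := by
    simp only [wprod, List.map_take, List.map_drop]
    exact List.prod_take_mul_prod_drop (l.1.map c) _
  rwa [ret_prod c hn l, one_mul, l.2.2] at h2

omit [Fintype α] in
lemma sigma_mk_eq {n : ℕ} (j j' : Fin n)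
    (x : Bset c (j + 1) × Aset c (n - (j + 1)))
    (y : Bset c (j' + 1) × Aset c (n - (j' + 1)))
    (h : (j : ℕ) = j') (h1 : x.1.1 = y.1.1) (h2 : x.2.1 = y.2.1) :
    (⟨j, x⟩ : Σ j : Fin n, Bset c (j + 1) × Aset c (n - (j + 1))) = ⟨j', y⟩ := by
  have : j = j' := Fin.ext h
  subst this
  exact congrArg _ (Prod.ext (Subtype.ext h1) (Subtype.ext h2))

noncomputable def decompEquiv (n : ℕ) (hn : 0 < n) :
    Aset c n ≃ Σ j : Fin n, Bset c (j + 1) × Aset c (n - (j + 1)) where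
  toFun l :=
    ⟨⟨Nat.find (exists_ret c hn l) - 1, by
        have := ret_pos c hn l; have := ret_le c hn l; omega⟩,
      ⟨l.1.take (Nat.find (exists_ret c hn l)), by
        simp only [List.length_take, Fin.val_mk]
        have := ret_pos c hn l; have := ret_le c hn l
        have hl := l.2.1; omega,
        ret_prod c hn l,
        by
        intro t ht htlt
        simp only [Fin.val_mk] at htlt
        rw [List.take_take, min_eq_left (by have := ret_pos c hn l; omega)]
        have := Nat.find_min (exists_ret c hn l) (m := t)
          (by have := ret_pos c hn l; omega)
        tauto⟩,
      ⟨l.1.drop (Nat.find (exists_ret c hn l)), by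
        simp only [List.length_drop, Fin.val_mk]
        have := ret_pos c hn l; have hl := l.2.1; omega,
        drop_prod c hn l⟩⟩
  invFun x := ⟨x.2.1.1 ++ x.2.2.1, by
      rw [List.length_append, x.2.1.2.1, x.2.2.2.1]
      have := x.1.isLt; omega,
    by rw [wprod_append, x.2.1.2.2.1, x.2.2.2.2, one_mul]⟩
  left_inv l := Subtype.ext (List.take_append_drop _ _)
  right_inv := by
    rintro ⟨j, u, v⟩
    have hlen : u.1.length = (j : ℕ) + 1 := u.2.1
    have hfind : ∀ h : (∃ t, 0 < t ∧ wprod c ((u.1 ++ v.1).take t) = 1),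
        Nat.find h = (j : ℕ) + 1 := by
      intro h
      rw [Nat.find_eq_iff]
      constructor
      · refine ⟨Nat.succ_pos _, ?_⟩
        rw [List.take_left' hlen]
        exact u.2.2.1
      · rintro t ht ⟨htpos, hteq⟩
        rw [List.take_append_of_le_length (by omega)] at hteq
        exact u.2.2.2 t htpos (by omega) hteq
    refine sigma_mk_eq c _ _ _ _ ?_ ?_ ?_
    · simp only [Fin.val_mk, hfind]; omega
    · simp only [Fin.val_mk, hfind]
      exact List.take_left' hlen
    · simp only [Fin.val_mk, hfind]
      exact List.drop_left' hlen

end FirstReturn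

section Cards
variable {G : Type*} [Group G] [DecidableEq G] {α : Type*} [Fintype α] (c : α → G)

lemma card_Aset_zero : Nat.card (Aset c 0) = 1 := by
  have e : Aset c 0 ≃ PUnit.{1} := {
    toFun := fun _ => PUnit.unit
    invFun := fun _ => ⟨[], rfl, by simp [wprod]⟩
    left_inv := fun l => Subtype.ext (by
      have := List.length_eq_zero_iff.mp l.2.1
      simp [this])
    right_inv := fun _ => rfl }
  rw [Nat.card_congr e]
  simp

lemma card_Aset_rec (n : ℕ) (hn : 0 < n) :
    Nat.card (Aset c n) =
      ∑ j ∈ Finset.range n, Nat.card (Bset c (j + 1)) * Nat.card (Aset c (n - (j + 1))) := by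
  letI : ∀ d, Fintype (Aset c d) := fun d => Fintype.ofFinite _
  letI : ∀ d, Fintype (Bset c d) := fun d => Fintype.ofFinite _
  rw [Nat.card_congr (decompEquiv c n hn), Nat.card_eq_fintype_card, Fintype.card_sigma]
  rw [← Fin.sum_univ_eq_sum_range (fun j => Nat.card (Bset c (j + 1)) * Nat.card (Aset c (n - (j + 1)))) n]
  refine Finset.sum_congr rfl fun j _ => ?_
  rw [Fintype.card_prod, Nat.card_eq_fintype_card, Nat.card_eq_fintype_card]

end Cards

open DihedralGroup

/-- **Free generators of `T(V¹)^{D_m}` count words which do not cross the identity.**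
Let `m ≥ 3`. Let `a d` be the number of words of length `d` over `{r, s}` in `D_m`
reducing to the identity, and `b d` the number of such words of length `d ≥ 1` which
moreover do not cross the identity (`b 0 = 0`). Then `(Σ a_d q^d)·(1 − Σ b_d q^d) = 1`
in `ℚ⟦q⟧`: the `b d` count the free generators of degree `d` of `T(V¹)^{D_m}`. -/
theorem dihedral_free_generators (m : ℕ) (hm : 3 ≤ m) (a b : ℕ → ℕ)
    (ha : ∀ d, a d =
      Nat.card {w : Fin d → {x // x ∈ ({r 1, sr 0} : Finset (DihedralGroup m))} //
        (List.ofFn fun i => (w i : DihedralGroup m)).prod = 1})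
    (hb0 : b 0 = 0)
    (hb : ∀ d, 0 < d → b d =
      Nat.card {w : Fin d → {x // x ∈ ({r 1, sr 0} : Finset (DihedralGroup m))} //
        (List.ofFn fun i => (w i : DihedralGroup m)).prod = 1 ∧
        ∀ j : ℕ, 0 < j → j < d →
          ((List.ofFn fun i => (w i : DihedralGroup m)).take j).prod ≠ 1}) :
    (PowerSeries.mk fun d => (a d : ℚ)) * (1 - PowerSeries.mk fun d => (b d : ℚ)) = 1 := by
  set S := {x // x ∈ ({r 1, sr 0} : Finset (DihedralGroup m))} with hS
  set c : S → DihedralGroup m := fun x => ↑x with hc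
  have hmap : ∀ {d : ℕ} (w : Fin d → S),
      (List.ofFn fun i => (w i : DihedralGroup m)) = (List.ofFn w).map c := by
    intro d w
    rw [List.map_ofFn]
    rfl
  have hA : ∀ d, a d = Nat.card (Aset c d) := by
    intro d
    rw [ha d]
    refine Nat.card_congr ((Equiv.subtypeEquivRight ?_).trans
      (ofFnEquiv d (fun l => wprod c l = 1)))
    intro w
    rw [hmap w]
    exact Iff.rfl
  have hB : ∀ d, 0 < d → b d = Nat.card (Bset c d) := by
    intro d hd
    rw [hb d hd]
    refine Nat.card_congr ((Equiv.subtypeEquivRight ?_).trans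
      (ofFnEquiv d (fun l => wprod c l = 1 ∧
        ∀ j, 0 < j → j < d → wprod c (l.take j) ≠ 1)))
    intro w
    rw [hmap w]
    simp only [wprod, ← List.map_take]
  have key0 : a 0 = 1 := by rw [hA 0, card_Aset_zero]
  have key : ∀ n, 0 < n → a n = ∑ j ∈ Finset.range n, b (j + 1) * a (n - (j + 1)) := by
    intro n hn
    rw [hA n, card_Aset_rec c n hn]
    exact Finset.sum_congr rfl fun j _ => by rw [hB (j + 1) (Nat.succ_pos _), hA]
  ext n
  rw [PowerSeries.coeff_mul, Finset.Nat.sum_antidiagonal_eq_sum_range_succ_mk,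
    Finset.sum_range_succ]
  simp only [map_sub, PowerSeries.coeff_mk, PowerSeries.coeff_one]
  obtain _ | n := n
  · norm_num [key0, hb0]
  · have hkeyN : a (n + 1) = ∑ k ∈ Finset.range (n + 1), b (n + 1 - k) * a k := by
      rw [key (n + 1) (Nat.succ_pos n),
        ← Finset.sum_range_reflect (fun j => b (j + 1) * a (n + 1 - (j + 1))) (n + 1)]
      refine Finset.sum_congr rfl fun j hj => ?_
      rw [Finset.mem_range] at hj
      have e1 : n + 1 - 1 - j + 1 = n + 1 - j := by omega
      have e2 : n + 1 - (n + 1 - j) = j := by omega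
      rw [e1, e2]
    have hsum : ∀ k ∈ Finset.range (n + 1),
        (a k : ℚ) * ((if n + 1 - k = 0 then (1 : ℚ) else 0) - b (n + 1 - k)) =
          -((b (n + 1 - k) : ℚ) * a k) := by
      intro k hk
      rw [Finset.mem_range] at hk
      rw [if_neg (by omega)]
      ring
    rw [Finset.sum_congr rfl hsum]
    have hcast : (a (n + 1) : ℚ) = ∑ k ∈ Finset.range (n + 1), (b (n + 1 - k) : ℚ) * a k := by
      exact_mod_cast congrArg (Nat.cast : ℕ → ℚ) hkeyN
    simp only [Nat.succ_ne_zero, if_neg, Nat.sub_self, if_pos, hb0, Nat.cast_zero, sub_zero,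
      Finset.sum_neg_distrib, mul_one, if_true]
    rw [hcast]
    simp
end

section
/- Let m ≥ 3 and for d ≥ 0 let a_d be the number of words of length d over {r, s} in D_m that reduce to the identity e, and set A(q) = Σ_{d≥0} a_d q^d ∈ ℚ⟦q⟧. Then 2·(A(q) − 1)·( Σ_{i=0}^{⌊m/2⌋} C(m, 2i)·(1 − 4q²)^i − (2q)^m ) = (2q)^m + Σ_{i=0}^{⌊m/2⌋} ( C(m+1, 2i+1) − 2·C(m, 2i) )·(1 − 4q²)^i, where C(a,b) denotes the binomial coefficient. Equivalently, the Hilbert–Poincaré series of T(V¹)^{D_m} equals 1 + (1/2)·[ (2q)^m + Σ_{i=0}^{⌊m/2⌋}(C(m+1,2i+1) − 2C(m,2i))(1−4q²)^i ] / [ Σ_{i=0}^{⌊m/2⌋} C(m,2i)(1−4q²)^i − (2q)^m ]. -/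
open DihedralGroup PowerSeries Finset

namespace DHSaux

/-- Even-part binomial identity. -/
lemma even_sum {R : Type*} [CommRing R] (y : R) (n : ℕ) :
    (1 + y) ^ n + (1 - y) ^ n =
      2 * ∑ i ∈ Finset.range (n / 2 + 1), (n.choose (2 * i) : R) * y ^ (2 * i) := by
  have h1 : (1 + y) ^ n = ∑ k ∈ Finset.range (n + 1), (n.choose k : R) * y ^ k := by
    rw [add_comm, add_pow]
    exact Finset.sum_congr rfl fun k _ => by ring
  have h2 : (1 - y) ^ n = ∑ k ∈ Finset.range (n + 1), (n.choose k : R) * (-y) ^ k := by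
    rw [sub_eq_add_neg, add_comm, add_pow]
    exact Finset.sum_congr rfl fun k _ => by ring
  rw [h1, h2, ← Finset.sum_add_distrib,
    ← Finset.sum_filter_add_sum_filter_not (Finset.range (n + 1)) (fun k => Even k)]
  have hoddz : ∑ k ∈ (Finset.range (n + 1)).filter (fun k => ¬ Even k),
      ((n.choose k : R) * y ^ k + (n.choose k : R) * (-y) ^ k) = 0 := by
    refine Finset.sum_eq_zero fun k hk => ?_
    rw [Finset.mem_filter] at hk
    rw [(Nat.not_even_iff_odd.1 hk.2).neg_pow]
    ring
  rw [hoddz, add_zero, Finset.mul_sum]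
  refine Finset.sum_nbij' (fun k => k / 2) (fun i => 2 * i) ?_ ?_ ?_ ?_ ?_
  · intro k hk
    rw [Finset.mem_filter, Finset.mem_range] at hk
    obtain ⟨t, ht⟩ := hk.2
    rw [Finset.mem_range]
    omega
  · intro i hi
    rw [Finset.mem_range] at hi
    rw [Finset.mem_filter, Finset.mem_range]
    refine ⟨?_, even_two_mul i⟩
    omega
  · intro k hk
    rw [Finset.mem_filter] at hk
    obtain ⟨t, ht⟩ := hk.2
    omega
  · intro i _
    omega
  · intro k hk
    rw [Finset.mem_filter] at hk
    obtain ⟨t, ht⟩ := hk.2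
    have h2k : 2 * (k / 2) = k := by omega
    rw [h2k, hk.2.neg_pow]
    ring

/-- Odd-part binomial identity. -/
lemma odd_sum {R : Type*} [CommRing R] (y : R) (n : ℕ) :
    (1 + y) ^ (n + 1) - (1 - y) ^ (n + 1) =
      2 * y * ∑ i ∈ Finset.range (n / 2 + 1), ((n + 1).choose (2 * i + 1) : R) * y ^ (2 * i) := by
  have h1 : (1 + y) ^ (n + 1) = ∑ k ∈ Finset.range (n + 2), ((n + 1).choose k : R) * y ^ k := by
    rw [add_comm, add_pow]
    exact Finset.sum_congr rfl fun k _ => by ring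
  have h2 : (1 - y) ^ (n + 1) = ∑ k ∈ Finset.range (n + 2), ((n + 1).choose k : R) * (-y) ^ k := by
    rw [sub_eq_add_neg, add_comm, add_pow]
    exact Finset.sum_congr rfl fun k _ => by ring
  rw [h1, h2, ← Finset.sum_sub_distrib,
    ← Finset.sum_filter_add_sum_filter_not (Finset.range (n + 2)) (fun k => Even k)]
  have hevenz : ∑ k ∈ (Finset.range (n + 2)).filter (fun k => Even k),
      (((n + 1).choose k : R) * y ^ k - ((n + 1).choose k : R) * (-y) ^ k) = 0 := by
    refine Finset.sum_eq_zero fun k hk => ?_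
    rw [Finset.mem_filter] at hk
    rw [hk.2.neg_pow]
    ring
  rw [hevenz, zero_add, Finset.mul_sum]
  refine Finset.sum_nbij' (fun k => k / 2) (fun i => 2 * i + 1) ?_ ?_ ?_ ?_ ?_
  · intro k hk
    rw [Finset.mem_filter, Finset.mem_range] at hk
    have hko := Nat.not_even_iff.1 hk.2
    rw [Finset.mem_range]
    omega
  · intro i hi
    rw [Finset.mem_range] at hi
    rw [Finset.mem_filter, Finset.mem_range]
    constructor
    · omega
    · rw [Nat.not_even_iff]
      omega
  · intro k hk
    rw [Finset.mem_filter] at hk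
    have hko := Nat.not_even_iff.1 hk.2
    omega
  · intro i _
    omega
  · intro k hk
    rw [Finset.mem_filter] at hk
    have hko := Nat.not_even_iff.1 hk.2
    have h2k : 2 * (k / 2) + 1 = k := by omega
    have hyk : y ^ k = y * y ^ (2 * (k / 2)) := by
      rw [← pow_succ']
      congr 1
      omega
    rw [(Nat.odd_iff.2 hko).neg_pow, hyk, h2k]
    ring

/-- The Catalan-type series `Λ = X·Cat(X²)`, the power-series root of `Λ = X + X Λ²`. -/
noncomputable def Lam : PowerSeries ℚ :=
  PowerSeries.mk fun n => if n % 2 = 1 then (catalan ((n - 1) / 2) : ℚ) else 0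

lemma coeff_Lam (j : ℕ) :
    PowerSeries.coeff j Lam = if j % 2 = 1 then (catalan ((j - 1) / 2) : ℚ) else 0 := by
  rw [Lam, PowerSeries.coeff_mk]

lemma constantCoeff_Lam : PowerSeries.constantCoeff Lam = 0 := by
  rw [← PowerSeries.coeff_zero_eq_constantCoeff, coeff_Lam]
  norm_num

lemma Lam_eq : Lam = X + X * Lam ^ 2 := by
  ext n
  rcases n with _ | n
  · rw [map_add, PowerSeries.coeff_zero_eq_constantCoeff, constantCoeff_Lam]
    simp
  · rw [map_add, PowerSeries.coeff_X, pow_two, PowerSeries.coeff_succ_X_mul,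
      PowerSeries.coeff_mul, coeff_Lam]
    have hsum : ∑ p ∈ Finset.HasAntidiagonal.antidiagonal n,
        (PowerSeries.coeff p.1) Lam * (PowerSeries.coeff p.2) Lam =
        ∑ p ∈ Finset.HasAntidiagonal.antidiagonal n, (if p.1 % 2 = 1 ∧ p.2 % 2 = 1 then
          (catalan ((p.1 - 1) / 2) : ℚ) * (catalan ((p.2 - 1) / 2) : ℚ) else 0) := by
      refine Finset.sum_congr rfl fun p _ => ?_
      rw [coeff_Lam, coeff_Lam]
      by_cases h1 : p.1 % 2 = 1 <;> by_cases h2 : p.2 % 2 = 1 <;> simp [h1, h2]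
    rw [hsum]
    rcases Nat.even_or_odd n with ⟨t, ht⟩ | hodd
    · -- n = 2t even, so n+1 odd; coefficient is catalan t
      subst ht
      rw [if_pos (by omega)]
      have hct : (t + t + 1 - 1) / 2 = t := by omega
      rw [hct]
      rcases Nat.eq_zero_or_pos t with rfl | ht0
      · simp
      · rw [if_neg (by omega), zero_add]
        have hre : ∑ p ∈ Finset.HasAntidiagonal.antidiagonal (t + t), (if p.1 % 2 = 1 ∧ p.2 % 2 = 1 then
            (catalan ((p.1 - 1) / 2) : ℚ) * (catalan ((p.2 - 1) / 2) : ℚ) else 0) =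
            ∑ p ∈ Finset.HasAntidiagonal.antidiagonal (t - 1), (catalan p.1 : ℚ) * (catalan p.2 : ℚ) := by
          rw [← Finset.sum_filter]
          refine Finset.sum_nbij' (fun p => ((p.1 - 1) / 2, (p.2 - 1) / 2))
            (fun p => (2 * p.1 + 1, 2 * p.2 + 1)) ?_ ?_ ?_ ?_ ?_
          · intro p hp
            simp only [Finset.mem_filter, Finset.HasAntidiagonal.mem_antidiagonal] at hp ⊢
            omega
          · intro p hp
            simp only [Finset.mem_filter, Finset.HasAntidiagonal.mem_antidiagonal] at hp ⊢
            omega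
          · intro p hp
            simp only [Finset.mem_filter, Finset.HasAntidiagonal.mem_antidiagonal] at hp
            have e1 : 2 * ((p.1 - 1) / 2) + 1 = p.1 := by omega
            have e2 : 2 * ((p.2 - 1) / 2) + 1 = p.2 := by omega
            obtain ⟨p1, p2⟩ := p
            simp only [Prod.mk.injEq]
            constructor <;> omega
          · intro p hp
            simp only [Finset.HasAntidiagonal.mem_antidiagonal] at hp
            obtain ⟨p1, p2⟩ := p
            simp only [Prod.mk.injEq]
            constructor <;> omega
          · intro p hp
            simp only [Finset.mem_filter, Finset.HasAntidiagonal.mem_antidiagonal] at hp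
            rfl
        rw [hre]
        have hcs := catalan_succ' (t - 1)
        have ht1 : t - 1 + 1 = t := by omega
        rw [ht1] at hcs
        rw [hcs]
        push_cast
        rfl
    · -- n odd : both sides 0
      obtain ⟨t, ht⟩ := hodd
      subst ht
      rw [if_neg (by omega), if_neg (by omega), zero_add]
      refine (Finset.sum_eq_zero fun p hp => ?_).symm
      rw [Finset.HasAntidiagonal.mem_antidiagonal] at hp
      rw [if_neg (by omega)]



variable {m : ℕ}

/-- The number of words of length `d` over `{r 1, sr 0}` with product `g`. -/
noncomputable def W (m : ℕ) (d : ℕ) (g : DihedralGroup m) : ℕ :=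
  Nat.card {w : Fin d → {x // x ∈ ({r 1, sr 0} : Finset (DihedralGroup m))} //
    (List.ofFn fun i => (w i : DihedralGroup m)).prod = g}

lemma mem_gens (x : {x // x ∈ ({r 1, sr 0} : Finset (DihedralGroup m))}) :
    (x : DihedralGroup m) = r 1 ∨ (x : DihedralGroup m) = sr 0 := by
  have := x.2
  rw [Finset.mem_insert, Finset.mem_singleton] at this
  exact this

lemma W_zero (g : DihedralGroup m) : W m 0 g = if g = 1 then 1 else 0 := by
  rw [W]
  split_ifs with hg
  · subst hg
    haveI : Unique {w : Fin 0 → {x // x ∈ ({r 1, sr 0} : Finset (DihedralGroup m))} //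
        (List.ofFn fun i => (w i : DihedralGroup m)).prod = 1} :=
      ⟨⟨⟨fun i => i.elim0, by simp⟩⟩, fun w => Subtype.ext (funext fun i => i.elim0)⟩
    exact Nat.card_unique
  · haveI : IsEmpty {w : Fin 0 → {x // x ∈ ({r 1, sr 0} : Finset (DihedralGroup m))} //
        (List.ofFn fun i => (w i : DihedralGroup m)).prod = g} := by
      refine ⟨fun w => hg ?_⟩
      have := w.2
      simpa using this.symm
    exact Nat.card_of_isEmpty

lemma prod_ofFn_succ {d : ℕ} (w : Fin (d + 1) → {x // x ∈ ({r 1, sr 0} : Finset (DihedralGroup m))}) :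
    (List.ofFn fun i => (w i : DihedralGroup m)).prod =
      (w 0 : DihedralGroup m) * (List.ofFn fun i : Fin d => (w i.succ : DihedralGroup m)).prod := by
  rw [List.ofFn_succ, List.prod_cons]

lemma W_succ {d : ℕ} {g g₁ g₂ : DihedralGroup m}
    (h1 : r 1 * g₁ = g) (h2 : sr 0 * g₂ = g) :
    W m (d + 1) g = W m d g₁ + W m d g₂ := by
  rw [W, W, W, ← Nat.card_sum]
  refine Nat.card_congr ?_
  refine
    { toFun := fun w =>
        if h : ((w.1 0 : DihedralGroup m) = r 1) then
          Sum.inl ⟨fun i => w.1 i.succ, by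
            refine mul_left_cancel (a := r 1) ?_
            rw [h1]
            have hp := w.2
            rw [prod_ofFn_succ, h] at hp
            exact hp⟩
        else
          Sum.inr ⟨fun i => w.1 i.succ, by
            refine mul_left_cancel (a := sr 0) ?_
            rw [h2]
            have hx := (mem_gens (w.1 0)).resolve_left h
            have hp := w.2
            rw [prod_ofFn_succ, hx] at hp
            exact hp⟩
      invFun := fun t =>
        match t with
        | Sum.inl u => ⟨Fin.cons ⟨r 1, by simp⟩ u.1, by
            rw [prod_ofFn_succ]
            simp only [Fin.cons_zero, Fin.cons_succ]
            rw [u.2, h1]⟩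
        | Sum.inr u => ⟨Fin.cons ⟨sr 0, by simp⟩ u.1, by
            rw [prod_ofFn_succ]
            simp only [Fin.cons_zero, Fin.cons_succ]
            rw [u.2, h2]⟩
      left_inv := fun w => by
        dsimp only
        rcases mem_gens (w.1 0) with h | h
        · rw [dif_pos h]
          dsimp only
          refine Subtype.ext (funext fun i => ?_)
          refine Fin.cases ?_ (fun j => ?_) i
          · exact Subtype.ext h.symm
          · rfl
        · rw [dif_neg (by rw [h]; simp)]
          dsimp only
          refine Subtype.ext (funext fun i => ?_)
          refine Fin.cases ?_ (fun j => ?_) i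
          · exact Subtype.ext h.symm
          · rfl
      right_inv := fun t => by
        rcases t with u | u
        · dsimp only
          rw [dif_pos (by rw [Fin.cons_zero])]
          exact congrArg Sum.inl (Subtype.ext (funext fun i => rfl))
        · dsimp only
          rw [dif_neg (by rw [Fin.cons_zero]; simp)]
          exact congrArg Sum.inr (Subtype.ext (funext fun i => rfl)) }


/-- Generating series of words with product `r k`. -/
noncomputable def uS (m : ℕ) (k : ZMod m) : PowerSeries ℚ :=
  PowerSeries.mk fun d => (W m d (r k) : ℚ)

/-- Generating series of words with product `sr k`. -/
noncomputable def vS (m : ℕ) (k : ZMod m) : PowerSeries ℚ :=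
  PowerSeries.mk fun d => (W m d (sr k) : ℚ)

lemma coeff_zero_X_mul (f : PowerSeries ℚ) : PowerSeries.coeff 0 (X * f) = 0 := by
  rw [PowerSeries.coeff_zero_eq_constantCoeff, map_mul, constantCoeff_X, zero_mul]

lemma uS_eq (m : ℕ) (k : ZMod m) :
    uS m k = (if k = 0 then 1 else 0) + X * (uS m (k - 1) + vS m k) := by
  ext n
  rcases n with _ | n
  · rw [uS, PowerSeries.coeff_mk, W_zero, map_add, coeff_zero_X_mul, add_zero]
    have h1 : ((r k : DihedralGroup m) = 1) ↔ k = 0 := by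
      rw [one_def]
      rw [r.injEq]
    split_ifs with hh hk hk
    · simp
    · exact absurd (h1.1 hh) hk
    · exact absurd (h1.2 hk) hh
    · simp
  · rw [uS, PowerSeries.coeff_mk,
      W_succ (g₁ := r (k - 1)) (g₂ := sr k)
        (by rw [r_mul_r]; congr 1; ring) (by rw [sr_mul_sr, sub_zero]),
      map_add, PowerSeries.coeff_succ_X_mul, map_add]
    have hz : PowerSeries.coeff (n + 1) (if k = 0 then (1 : PowerSeries ℚ) else 0) = 0 := by
      split_ifs <;> simp [PowerSeries.coeff_one]
    rw [hz, zero_add, uS, vS, PowerSeries.coeff_mk, PowerSeries.coeff_mk]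
    push_cast
    ring

lemma vS_eq (m : ℕ) (k : ZMod m) :
    vS m k = X * (vS m (k + 1) + uS m k) := by
  ext n
  rcases n with _ | n
  · rw [vS, PowerSeries.coeff_mk, W_zero, coeff_zero_X_mul]
    rw [if_neg (by rw [one_def]; intro h; cases h)]
    norm_num
  · rw [vS, PowerSeries.coeff_mk,
      W_succ (g₁ := sr (k + 1)) (g₂ := r k)
        (by rw [r_mul_sr]; congr 1; ring) (by rw [sr_mul_r, zero_add]),
      PowerSeries.coeff_succ_X_mul, map_add, vS, uS, PowerSeries.coeff_mk,
      PowerSeries.coeff_mk]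
    push_cast
    ring

lemma uniq (m : ℕ) (w : ZMod m → PowerSeries ℚ)
    (h : ∀ k, w k = X * (w (k + 1) + w (k - 1))) : ∀ k, w k = 0 := by
  have key : ∀ n k, PowerSeries.coeff n (w k) = 0 := by
    intro n
    induction n using Nat.strong_induction_on with
    | _ n ih =>
      intro k
      rcases n with _ | n
      · rw [h k, coeff_zero_X_mul]
      · rw [h k, PowerSeries.coeff_succ_X_mul, map_add,
          ih n (Nat.lt_succ_self n), ih n (Nat.lt_succ_self n), add_zero]
  intro k
  ext n
  rw [key n k, map_zero]

end DHSaux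

open DHSaux

/-- **Closed form for the Hilbert–Poincaré series of `T(V¹)^{D_m}`.**
Let `m ≥ 3` and let `a d` be the number of words of length `d` over `{r, s}` in `D_m`
which reduce to the identity, with generating series `A(q) = Σ a_d q^d ∈ ℚ⟦q⟧` (the
Hilbert–Poincaré series of `T(V¹)^{D_m}`). Then
`2(A(q) − 1)(Σ_{i≤⌊m/2⌋} C(m,2i)(1−4q²)^i − (2q)^m)
  = (2q)^m + Σ_{i≤⌊m/2⌋}(C(m+1,2i+1) − 2C(m,2i))(1−4q²)^i`. -/
theorem dihedral_hilbert_series (m : ℕ) (hm : 3 ≤ m) (a : ℕ → ℕ)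
    (ha : ∀ d, a d =
      Nat.card {w : Fin d → {x // x ∈ ({r 1, sr 0} : Finset (DihedralGroup m))} //
        (List.ofFn fun i => (w i : DihedralGroup m)).prod = 1}) :
    2 * ((PowerSeries.mk fun d => (a d : ℚ)) - 1) *
        ((∑ i ∈ Finset.range (m / 2 + 1),
            PowerSeries.C (R := ℚ) (m.choose (2 * i) : ℚ) *
              (1 - 4 * (PowerSeries.X : PowerSeries ℚ) ^ 2) ^ i) -
          (2 * PowerSeries.X) ^ m) =
      (2 * (PowerSeries.X : PowerSeries ℚ)) ^ m +
        ∑ i ∈ Finset.range (m / 2 + 1),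
          PowerSeries.C (R := ℚ) (((m + 1).choose (2 * i + 1) : ℚ) - 2 * (m.choose (2 * i) : ℚ)) *
            (1 - 4 * (PowerSeries.X : PowerSeries ℚ) ^ 2) ^ i := by
  classical
  haveI : NeZero m := ⟨by omega⟩
  haveI : Fact (1 < m) := ⟨by omega⟩
  have hΛ : Lam = X + X * Lam ^ 2 := Lam_eq
  -- step relations for powers of Λ
  have hstep : ∀ j : ℕ, 1 ≤ j → Lam ^ j = X * Lam ^ (j + 1) + X * Lam ^ (j - 1) := by
    intro j hj
    obtain ⟨i, rfl⟩ : ∃ i, j = i + 1 := ⟨j - 1, by omega⟩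
    have h1 : i + 1 - 1 = i := rfl
    rw [h1]
    linear_combination (Lam ^ i) * hΛ
  have hLm : Lam ^ m = Lam * Lam ^ (m - 1) := by
    conv_lhs => rw [show m = (m - 1) + 1 by omega]
    rw [pow_succ']
  -- the word generating series as `uS`
  have hA : (PowerSeries.mk fun d => (a d : ℚ)) = uS m 0 := by
    ext n
    rw [PowerSeries.coeff_mk, uS, PowerSeries.coeff_mk]
    congr 1
    rw [ha n]
    rfl
  -- the cyclic recurrence for vS
  have hR : ∀ k : ZMod m, vS m k = X * vS m (k + 1) + X * vS m (k - 1) +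
      (if k = 0 then X else 0) := by
    intro k
    have h1 := vS_eq m k
    have h2 := uS_eq m k
    have h3 := vS_eq m (k - 1)
    rw [sub_add_cancel] at h3
    rcases eq_or_ne k 0 with rfl | hk
    · rw [if_pos rfl]
      rw [if_pos rfl] at h2
      linear_combination h1 + X * h2 - X * h3
    · rw [if_neg hk]
      rw [if_neg hk] at h2
      linear_combination h1 + X * h2 - X * h3
  -- the candidate solution satisfies the same recurrence
  have hcand : ∀ k : ZMod m,
      X * (Lam ^ (ZMod.val k) + Lam ^ (m - ZMod.val k)) =
        X * (X * (Lam ^ (ZMod.val (k + 1)) + Lam ^ (m - ZMod.val (k + 1)))) +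
        X * (X * (Lam ^ (ZMod.val (k - 1)) + Lam ^ (m - ZMod.val (k - 1)))) +
        (if k = 0 then X * ((1 - 2 * X * Lam) * (1 - Lam * Lam ^ (m - 1))) else 0) := by
    intro k
    rcases eq_or_ne k 0 with rfl | hk
    · rw [if_pos rfl]
      have e1 : ((0 : ZMod m) + 1).val = 1 := by rw [zero_add, ZMod.val_one]
      have e2 : ((0 : ZMod m) - 1).val = m - 1 := by
        rw [zero_sub]
        have hneg : (-1 : ZMod m) = ((m - 1 : ℕ) : ZMod m) := by
          rw [Nat.cast_sub (by omega), ZMod.natCast_self, Nat.cast_one, zero_sub]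
        rw [hneg, ZMod.val_cast_of_lt (by omega)]
      rw [ZMod.val_zero, e1, e2, Nat.sub_zero, show m - (m - 1) = 1 by omega,
        pow_zero, pow_one, hLm]
      linear_combination (2 * X * Lam ^ (m - 1)) * hΛ
    · have hval : 1 ≤ k.val := by
        have hvz : k.val ≠ 0 := fun h => hk ((ZMod.val_eq_zero k).1 h)
        omega
      have hvlt : k.val < m := ZMod.val_lt k
      have hcast : ((k.val : ℕ) : ZMod m) = k := by rw [ZMod.natCast_val, ZMod.cast_id]
      rw [if_neg hk, add_zero]
      rcases eq_or_ne (k.val) (m - 1) with he | hne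
      · have ekp : k + 1 = 0 := by
          calc k + 1 = ((m - 1 : ℕ) : ZMod m) + 1 := by rw [← hcast, he]
            _ = (((m - 1) + 1 : ℕ) : ZMod m) := by push_cast; ring
            _ = 0 := by rw [show (m - 1) + 1 = m by omega, ZMod.natCast_self]
        have ekm : (k - 1).val = m - 2 := by
          have hrw : k - 1 = ((m - 2 : ℕ) : ZMod m) := by
            rw [← hcast, he, show (m - 1 : ℕ) = (m - 2) + 1 by omega]
            push_cast
            ring
          rw [hrw, ZMod.val_cast_of_lt (by omega)]
        rw [he, ekp, ekm, ZMod.val_zero, Nat.sub_zero,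
          show m - (m - 1) = 1 by omega, show m - (m - 2) = 2 by omega, pow_one, pow_zero, hLm]
        have hst := hstep (m - 1) (by omega)
        rw [show (m - 1) + 1 = m by omega, show m - 1 - 1 = m - 2 by omega, hLm] at hst
        linear_combination X * hst + X * hΛ
      · have ekp : (k + 1).val = k.val + 1 := by
          have hrw : ((k.val + 1 : ℕ) : ZMod m) = k + 1 := by push_cast; rw [hcast]
          rw [← hrw, ZMod.val_cast_of_lt (by omega)]
        have ekm : (k - 1).val = k.val - 1 := by
          have hrw : ((k.val - 1 : ℕ) : ZMod m) = k - 1 := by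
            rw [Nat.cast_sub hval, Nat.cast_one, hcast]
          rw [← hrw, ZMod.val_cast_of_lt (by omega)]
        rw [ekp, ekm, show m - (k.val + 1) = (m - k.val) - 1 by omega,
          show m - (k.val - 1) = (m - k.val) + 1 by omega]
        have h1 := hstep k.val hval
        have h2 := hstep (m - k.val) (by omega)
        linear_combination X * h1 + X * h2
  -- uniqueness: identify `Den * vS` with the candidate
  have hDv : ∀ k : ZMod m,
      ((1 - 2 * X * Lam) * (1 - Lam * Lam ^ (m - 1))) * vS m k =
        X * (Lam ^ (ZMod.val k) + Lam ^ (m - ZMod.val k)) := by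
    have hz := uniq m (fun k => ((1 - 2 * X * Lam) * (1 - Lam * Lam ^ (m - 1))) * vS m k -
        X * (Lam ^ (ZMod.val k) + Lam ^ (m - ZMod.val k))) ?_
    · intro k
      have := hz k
      linear_combination this
    · intro k
      rcases eq_or_ne k 0 with rfl | hk
      · have hrr := hR 0
        rw [if_pos rfl] at hrr
        have hc := hcand 0
        rw [if_pos rfl] at hc
        linear_combination ((1 - 2 * X * Lam) * (1 - Lam * Lam ^ (m - 1))) * hrr - hc
      · have hrr := hR k
        rw [if_neg hk] at hrr
        have hc := hcand k
        rw [if_neg hk] at hc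
        linear_combination ((1 - 2 * X * Lam) * (1 - Lam * Lam ^ (m - 1))) * hrr - hc
  have hv0 : ((1 - 2 * X * Lam) * (1 - Lam * Lam ^ (m - 1))) * vS m 0 =
      X * (1 + Lam * Lam ^ (m - 1)) := by
    have := hDv 0
    rw [ZMod.val_zero, Nat.sub_zero, pow_zero, hLm] at this
    exact this
  have hv1 : ((1 - 2 * X * Lam) * (1 - Lam * Lam ^ (m - 1))) * vS m 1 =
      X * (Lam + Lam ^ (m - 1)) := by
    have := hDv 1
    rw [ZMod.val_one, pow_one] at this
    exact this
  -- the key identity for the generating series A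
  have hA2 : ((1 - 2 * X * Lam) * (1 - Lam * Lam ^ (m - 1))) *
      (X * (PowerSeries.mk fun d => (a d : ℚ))) =
      X * (1 + Lam * Lam ^ (m - 1)) - X * (X * (Lam + Lam ^ (m - 1))) := by
    rw [hA]
    have h0 := vS_eq m 0
    rw [zero_add] at h0
    linear_combination hv0 - X * hv1 - ((1 - 2 * X * Lam) * (1 - Lam * Lam ^ (m - 1))) * h0
  -- power rewrites
  have hXK : X * Lam = Lam ^ 2 * (1 - X * Lam) := by linear_combination (-Lam) * hΛ
  have hXX : X = Lam * (1 - X * Lam) := by linear_combination (-1 : PowerSeries ℚ) * hΛ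
  have hXLm : (X * Lam) ^ m = (Lam * Lam ^ (m - 1)) ^ 2 * (1 - X * Lam) ^ m := by
    conv_lhs => rw [hXK]
    rw [mul_pow]
    congr 1
    have hsw : (Lam ^ 2) ^ m = (Lam ^ m) ^ 2 := by
      rw [← pow_mul, ← pow_mul, Nat.mul_comm]
    rw [hsw, hLm]
  have hq : (2 * X) ^ m = (2 : PowerSeries ℚ) ^ m *
      ((Lam * Lam ^ (m - 1)) * (1 - X * Lam) ^ m) := by
    rw [mul_pow]
    congr 1
    conv_lhs => rw [hXX]
    rw [mul_pow, hLm]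
  have hS2 : (1 - 2 * X * Lam) ^ 2 = 1 - 4 * X ^ 2 := by
    linear_combination (-4 * X) * hΛ
  -- the two binomial sums
  have hT1 : 2 * (∑ i ∈ Finset.range (m / 2 + 1),
      PowerSeries.C (R := ℚ) (m.choose (2 * i) : ℚ) *
        (1 - 4 * (PowerSeries.X : PowerSeries ℚ) ^ 2) ^ i) =
      (2 : PowerSeries ℚ) ^ m * (1 - X * Lam) ^ m +
      (2 : PowerSeries ℚ) ^ m * ((Lam * Lam ^ (m - 1)) ^ 2 * (1 - X * Lam) ^ m) := by
    have hTT : (∑ i ∈ Finset.range (m / 2 + 1),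
        PowerSeries.C (R := ℚ) (m.choose (2 * i) : ℚ) *
          (1 - 4 * (PowerSeries.X : PowerSeries ℚ) ^ 2) ^ i) =
        ∑ i ∈ Finset.range (m / 2 + 1),
          ((m.choose (2 * i) : PowerSeries ℚ)) * ((1 - 2 * X * Lam) ^ (2 * i)) := by
      refine Finset.sum_congr rfl fun i _ => ?_
      rw [← hS2, ← pow_mul, map_natCast (PowerSeries.C (R := ℚ))]
    have e := even_sum (1 - 2 * X * Lam) m
    rw [show (1 + (1 - 2 * X * Lam)) = 2 * (1 - X * Lam) by ring,
      show (1 - (1 - 2 * X * Lam)) = 2 * (X * Lam) by ring, mul_pow, mul_pow, hXLm] at e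
    rw [hTT]
    linear_combination -e
  have hT2 : 2 * (1 - 2 * X * Lam) * (∑ i ∈ Finset.range (m / 2 + 1),
      PowerSeries.C (R := ℚ) ((m + 1).choose (2 * i + 1) : ℚ) *
        (1 - 4 * (PowerSeries.X : PowerSeries ℚ) ^ 2) ^ i) =
      2 * (2 : PowerSeries ℚ) ^ m * ((1 - X * Lam) ^ m * (1 - X * Lam)) -
      2 * (2 : PowerSeries ℚ) ^ m *
        ((Lam * Lam ^ (m - 1)) ^ 2 * (1 - X * Lam) ^ m * (X * Lam)) := by
    have hTT : (∑ i ∈ Finset.range (m / 2 + 1),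
        PowerSeries.C (R := ℚ) ((m + 1).choose (2 * i + 1) : ℚ) *
          (1 - 4 * (PowerSeries.X : PowerSeries ℚ) ^ 2) ^ i) =
        ∑ i ∈ Finset.range (m / 2 + 1),
          (((m + 1).choose (2 * i + 1) : PowerSeries ℚ)) * ((1 - 2 * X * Lam) ^ (2 * i)) := by
      refine Finset.sum_congr rfl fun i _ => ?_
      rw [← hS2, ← pow_mul, map_natCast (PowerSeries.C (R := ℚ))]
    have e := odd_sum (1 - 2 * X * Lam) m
    rw [show (1 + (1 - 2 * X * Lam)) = 2 * (1 - X * Lam) by ring,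
      show (1 - (1 - 2 * X * Lam)) = 2 * (X * Lam) by ring, mul_pow, mul_pow] at e
    rw [hTT]
    have hXLm1 : (X * Lam) ^ (m + 1) =
        (Lam * Lam ^ (m - 1)) ^ 2 * (1 - X * Lam) ^ m * (X * Lam) := by
      rw [pow_succ, hXLm]
    rw [pow_succ (2 : PowerSeries ℚ) m, pow_succ (1 - X * Lam) m, hXLm1] at e
    linear_combination -e
  -- split the right-hand sum of the goal
  have hsplit : (∑ i ∈ Finset.range (m / 2 + 1),
      PowerSeries.C (R := ℚ) (((m + 1).choose (2 * i + 1) : ℚ) - 2 * (m.choose (2 * i) : ℚ)) *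
        (1 - 4 * (PowerSeries.X : PowerSeries ℚ) ^ 2) ^ i) =
      (∑ i ∈ Finset.range (m / 2 + 1),
        PowerSeries.C (R := ℚ) ((m + 1).choose (2 * i + 1) : ℚ) *
          (1 - 4 * (PowerSeries.X : PowerSeries ℚ) ^ 2) ^ i) -
      2 * (∑ i ∈ Finset.range (m / 2 + 1),
        PowerSeries.C (R := ℚ) (m.choose (2 * i) : ℚ) *
          (1 - 4 * (PowerSeries.X : PowerSeries ℚ) ^ 2) ^ i) := by
    rw [Finset.mul_sum, ← Finset.sum_sub_distrib]
    refine Finset.sum_congr rfl fun i _ => ?_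
    simp only [map_sub, map_mul, map_ofNat]
    ring
  rw [hsplit]
  -- nonzero multiplier
  have hne : ∀ f : PowerSeries ℚ, PowerSeries.constantCoeff f ≠ 0 → f ≠ 0 := by
    intro f hf hc
    rw [hc, map_zero] at hf
    exact hf rfl
  have hcΛ : PowerSeries.constantCoeff Lam = 0 := constantCoeff_Lam
  have hS0 : (1 - 2 * X * Lam) ≠ 0 := by
    refine hne _ ?_
    rw [map_sub, map_one, map_mul, map_mul, constantCoeff_X]
    norm_num
  have hB0 : (1 - Lam * Lam ^ (m - 1)) ≠ 0 := by
    refine hne _ ?_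
    rw [map_sub, map_one, map_mul, hcΛ, zero_mul]
    norm_num
  have h20 : (2 : PowerSeries ℚ) ≠ 0 := by
    refine hne _ ?_
    rw [map_ofNat]
    norm_num
  have hM0 : ((2 : PowerSeries ℚ) * (1 - 2 * X * Lam)) *
      (X * ((1 - 2 * X * Lam) * (1 - Lam * Lam ^ (m - 1)))) ≠ 0 :=
    mul_ne_zero (mul_ne_zero h20 hS0)
      (mul_ne_zero PowerSeries.X_ne_zero (mul_ne_zero hS0 hB0))
  refine mul_left_cancel₀ hM0 ?_
  linear_combination
    (4 * (∑ i ∈ Finset.range (m / 2 + 1),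
        PowerSeries.C (R := ℚ) (m.choose (2 * i) : ℚ) *
          (1 - 4 * (PowerSeries.X : PowerSeries ℚ) ^ 2) ^ i) - 4 * (2 * X) ^ m -
      8 * X * Lam * (∑ i ∈ Finset.range (m / 2 + 1),
        PowerSeries.C (R := ℚ) (m.choose (2 * i) : ℚ) *
          (1 - 4 * (PowerSeries.X : PowerSeries ℚ) ^ 2) ^ i) +
      8 * X * Lam * (2 * X) ^ m) * hA2 +
    (-X + X * Lam * Lam ^ (m - 1) + 2 * X ^ 2 * Lam -
      2 * X ^ 2 * Lam ^ 2 * Lam ^ (m - 1)) * hT2 +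
    (2 * X + 2 * X * Lam * Lam ^ (m - 1) - 2 * X ^ 2 * Lam ^ (m - 1) - 6 * X ^ 2 * Lam -
      4 * X ^ 2 * Lam ^ 2 * Lam ^ (m - 1) + 4 * X ^ 3 * Lam * Lam ^ (m - 1) +
      4 * X ^ 3 * Lam ^ 2) * hT1 +
    (-2 * X - 6 * X * Lam * Lam ^ (m - 1) + 4 * X ^ 2 * Lam ^ (m - 1) + 4 * X ^ 2 * Lam +
      16 * X ^ 2 * Lam ^ 2 * Lam ^ (m - 1) - 8 * X ^ 3 * Lam * Lam ^ (m - 1) -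
      8 * X ^ 3 * Lam ^ 3 * Lam ^ (m - 1)) * hq +
    (2 * X * Lam ^ (m - 1) * (1 - X * Lam) ^ m * (2 : PowerSeries ℚ) ^ m -
      4 * X * Lam * (Lam ^ (m - 1)) ^ 2 * (1 - X * Lam) ^ m * (2 : PowerSeries ℚ) ^ m +
      2 * X * Lam ^ 2 * (Lam ^ (m - 1)) ^ 3 * (1 - X * Lam) ^ m * (2 : PowerSeries ℚ) ^ m -
      4 * X ^ 2 * Lam * Lam ^ (m - 1) * (1 - X * Lam) ^ m * (2 : PowerSeries ℚ) ^ m +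
      8 * X ^ 2 * Lam ^ 2 * (Lam ^ (m - 1)) ^ 2 * (1 - X * Lam) ^ m * (2 : PowerSeries ℚ) ^ m -
      4 * X ^ 2 * Lam ^ 3 * (Lam ^ (m - 1)) ^ 3 * (1 - X * Lam) ^ m * (2 : PowerSeries ℚ) ^ m) *
      hΛ
end
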